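/- arXiv:2106.13047 — 14 statements merged into one kernel-verified Lean document; each statement's English description precedes it below -/
import Mathlib

section
/- Let n be a positive integer and let v = (r, d, a) be an integer triple with r ≥ 0, d > 0 and v² = 2nd² − 2ra ≥ −2. Then D_v contains no isotropic vector: there is no v₁ = (r₁, d₁, a₁) ∈ D_v with v₁² = 0 (equivalently nd₁² = r₁a₁). Consequently every element of D_v satisfies v₁² = −2. -/
/-- Mukai square of the triple `(r, d, a)` on a K3 surface with `H² = 2n`:
`v² = 2nd² − 2ra`. -/
def mukaiSq (n r d a : ℤ) : ℤ := 2 * n * d ^ 2 - 2 * r * a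

/-- Mukai pairing `⟨(r,d,a), (r₁,d₁,a₁)⟩ = 2ndd₁ − ra₁ − r₁a`. -/
def mukaiPair (n r d a r₁ d₁ a₁ : ℤ) : ℤ := 2 * n * d * d₁ - r * a₁ - r₁ * a

/-- `(r₁, d₁, a₁) ∈ D_{(r,d,a)}`. -/
def memD (n r d a r₁ d₁ a₁ : ℤ) : Prop :=
  (mukaiSq n r₁ d₁ a₁ = 0 ∨ mukaiSq n r₁ d₁ a₁ = -2) ∧
  0 < d₁ ∧ d₁ ≤ d ∧
  mukaiPair n r d a r₁ d₁ a₁ < mukaiSq n r₁ d₁ a₁ + 2 ∧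
  0 < (a₁ * d - a * d₁) * (r₁ * d - r * d₁)

/-- `(r₁, d₁, a₁) ∈ D_{(r,d,a)}^{BN}`. -/
def memDBN (n r d a r₁ d₁ a₁ : ℤ) : Prop :=
  memD n r d a r₁ d₁ a₁ ∧
  0 < d * r₁ - d₁ * r ∧ d * r₁ - d₁ * r ≤ d * a₁ - d₁ * a


private lemma aux_pos (d₁ S : ℤ) (hd1 : 0 < d₁) (h4 : 4 * d₁ ^ 2 ≤ S ^ 2)
    (h5 : 0 < S) (h6 : S ≤ d₁) : False := by nlinarith

private lemma aux_neg (d₁ S : ℤ) (hd1 : 0 < d₁) (h4 : 4 * d₁ ^ 2 ≤ S ^ 2)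
    (h5 : S < 0) (h6 : -d₁ ≤ S) : False := by nlinarith

private lemma aux_final (d d₁ P Q AR : ℤ) (hd : 0 < d) (hd1 : 0 < d₁) (hdd : d₁ ≤ d)
    (hAR : 0 < AR) (hid : AR = d * d₁ * P - d₁ ^ 2 * Q) (hQ : -1 ≤ Q) (hP : P ≤ -2) :
    False := by nlinarith [mul_pos hd hd1, mul_pos hd1 hd1,
      mul_le_mul_of_nonneg_left hP (mul_pos hd hd1).le,
      mul_le_mul_of_nonneg_left hdd hd1.le]

set_option maxHeartbeats 800000 in
lemma key_lemma (n r d a : ℤ) (hn : 0 < n) (hr : 0 ≤ r) (hd : 0 < d)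
    (hv : -2 ≤ mukaiSq n r d a) (r₁ d₁ a₁ : ℤ) (hm : memD n r d a r₁ d₁ a₁) :
    mukaiSq n r₁ d₁ a₁ ≠ 0 := by
  intro hzero
  obtain ⟨-, hd1, hd1d, hP, hAR⟩ := hm
  rw [hzero] at hP
  simp only [mukaiSq, mukaiPair] at hzero hP hv
  have h0 : n * d₁ ^ 2 = r₁ * a₁ := by linarith
  obtain ⟨A, hA⟩ : ∃ A : ℤ, A = a₁ * d - a * d₁ := ⟨_, rfl⟩
  obtain ⟨R, hRe⟩ : ∃ R : ℤ, R = r₁ * d - r * d₁ := ⟨_, rfl⟩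
  obtain ⟨P, hPdef⟩ : ∃ P : ℤ, P = 2 * n * d * d₁ - r * a₁ - r₁ * a := ⟨_, rfl⟩
  rw [← hA, ← hRe] at hAR
  have hPle : P ≤ 1 := by omega
  have hsum : a₁ * R + r₁ * A = d₁ * P := by
    rw [hA, hRe, hPdef]; linear_combination (-2 * d) * h0
  have hprod : (a₁ * R) * (r₁ * A) = n * d₁ ^ 2 * (A * R) := by
    rw [hA, hRe]; linear_combination (-((a₁ * d - a * d₁) * (r₁ * d - r * d₁))) * h0
  have hr1a1 : 0 < r₁ * a₁ := by nlinarith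
  rcases lt_trichotomy r₁ 0 with hr1 | hr1 | hr1
  · -- r₁ < 0, so a₁ < 0, R < 0, A < 0
    have ha1 : a₁ < 0 := by nlinarith
    have hRneg : R < 0 := by rw [hRe]; nlinarith
    have hAneg : A < 0 := by
      by_contra h
      push_neg at h
      nlinarith [mul_nonpos_of_nonneg_of_nonpos h hRneg.le]
    have hX : 0 < a₁ * R := mul_pos_of_neg_of_neg ha1 hRneg
    have hY : 0 < r₁ * A := mul_pos_of_neg_of_neg hr1 hAneg
    have h1 : d₁ ^ 2 ≤ d₁ ^ 2 * (A * R) := le_mul_of_one_le_right (by positivity) hAR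
    have h2 : d₁ ^ 2 * (A * R) ≤ n * (d₁ ^ 2 * (A * R)) :=
      le_mul_of_one_le_left (by positivity) hn
    have h3 : d₁ ^ 2 ≤ (a₁ * R) * (r₁ * A) := by
      rw [hprod]; linarith [(by ring : n * (d₁ ^ 2 * (A * R)) = n * d₁ ^ 2 * (A * R))]
    have h4 : 4 * d₁ ^ 2 ≤ (d₁ * P) ^ 2 := by nlinarith [sq_nonneg (a₁ * R - r₁ * A)]
    have h5 : 0 < d₁ * P := by linarith
    have h6 : d₁ * P ≤ d₁ := by
      calc d₁ * P ≤ d₁ * 1 := mul_le_mul_of_nonneg_left hPle hd1.le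
        _ = d₁ := mul_one d₁
    exact aux_pos d₁ (d₁ * P) hd1 h4 h5 h6
  · rw [hr1] at hr1a1; simp at hr1a1
  · have ha1 : 0 < a₁ := by nlinarith
    rcases lt_trichotomy R 0 with hRneg | hR0 | hRpos
    · have hAneg : A < 0 := by
        by_contra h
        push_neg at h
        nlinarith [mul_nonpos_of_nonneg_of_nonpos h hRneg.le]
      have hX : r₁ * A < 0 := mul_neg_of_pos_of_neg hr1 hAneg
      have hY : a₁ * R < 0 := mul_neg_of_pos_of_neg ha1 hRneg
      have h1 : d₁ ^ 2 ≤ d₁ ^ 2 * (A * R) := le_mul_of_one_le_right (by positivity) hAR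
      have h2 : d₁ ^ 2 * (A * R) ≤ n * (d₁ ^ 2 * (A * R)) :=
        le_mul_of_one_le_left (by positivity) hn
      have h3 : d₁ ^ 2 ≤ (a₁ * R) * (r₁ * A) := by
        rw [hprod]; linarith [(by ring : n * (d₁ ^ 2 * (A * R)) = n * d₁ ^ 2 * (A * R))]
      have h4 : 4 * d₁ ^ 2 ≤ (d₁ * P) ^ 2 := by nlinarith [sq_nonneg (a₁ * R - r₁ * A)]
      have h5 : d₁ * P < 0 := by linarith
      have hPle2 : P ≤ -2 := by
        by_contra hc
        push_neg at hc
        have h6 : -d₁ ≤ d₁ * P := by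
          calc -d₁ = d₁ * (-1) := by ring
            _ ≤ d₁ * P := mul_le_mul_of_nonneg_left (by omega) hd1.le
        exact aux_neg d₁ (d₁ * P) hd1 h4 h5 h6
      have hid : A * R = d * d₁ * P - d₁ ^ 2 * (n * d ^ 2 - a * r) := by
        rw [hA, hRe, hPdef]; linear_combination (-(d ^ 2)) * h0
      have h6 : -1 ≤ n * d ^ 2 - a * r := by linarith
      exact aux_final d d₁ P (n * d ^ 2 - a * r) (A * R) hd hd1 hd1d hAR hid h6 hPle2
    · rw [hR0] at hAR; simp at hAR
    · have hApos : 0 < A := by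
        by_contra h
        push_neg at h
        nlinarith [mul_nonpos_of_nonpos_of_nonneg h hRpos.le]
      have hX : 0 < a₁ * R := mul_pos ha1 hRpos
      have hY : 0 < r₁ * A := mul_pos hr1 hApos
      have h1 : d₁ ^ 2 ≤ d₁ ^ 2 * (A * R) := le_mul_of_one_le_right (by positivity) hAR
      have h2 : d₁ ^ 2 * (A * R) ≤ n * (d₁ ^ 2 * (A * R)) :=
        le_mul_of_one_le_left (by positivity) hn
      have h3 : d₁ ^ 2 ≤ (a₁ * R) * (r₁ * A) := by
        rw [hprod]; linarith [(by ring : n * (d₁ ^ 2 * (A * R)) = n * d₁ ^ 2 * (A * R))]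
      have h4 : 4 * d₁ ^ 2 ≤ (d₁ * P) ^ 2 := by nlinarith [sq_nonneg (a₁ * R - r₁ * A)]
      have h5 : 0 < d₁ * P := by linarith
      have h6 : d₁ * P ≤ d₁ := by
        calc d₁ * P ≤ d₁ * 1 := mul_le_mul_of_nonneg_left hPle hd1.le
          _ = d₁ := mul_one d₁
      exact aux_pos d₁ (d₁ * P) hd1 h4 h5 h6

/-- `D_v` contains no isotropic vector; consequently every element
of `D_v` is spherical (`v₁² = −2`). -/
theorem no_isotropic_in_D (n r d a : ℤ) (hn : 0 < n) (hr : 0 ≤ r) (hd : 0 < d)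
    (hv : -2 ≤ mukaiSq n r d a) :
    (¬ ∃ r₁ d₁ a₁ : ℤ, memD n r d a r₁ d₁ a₁ ∧ mukaiSq n r₁ d₁ a₁ = 0) ∧
    (∀ r₁ d₁ a₁ : ℤ, memD n r d a r₁ d₁ a₁ → mukaiSq n r₁ d₁ a₁ = -2) := by
  constructor
  · rintro ⟨r₁, d₁, a₁, hm, hz⟩
    exact key_lemma n r d a hn hr hd hv r₁ d₁ a₁ hm hz
  · intro r₁ d₁ a₁ hm
    rcases hm.1 with h | h
    · exact absurd h (key_lemma n r d a hn hr hd hv r₁ d₁ a₁ hm)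
    · exact h
end

section
/- Let n be a positive integer and let v = (r, d, a) be an integer triple with r ≥ 0, d > 0 and a ≤ 0. Then D_v = ∅, i.e. no integer triple v₁ = (r₁, d₁, a₁) satisfies all of: v₁² ∈ {0, −2}, 0 < d₁ ≤ d, ⟨v, v₁⟩ < v₁² + 2, and (a₁d − ad₁)·(r₁d − rd₁) > 0. -/
set_option maxHeartbeats 1000000 in
/-- if `a ≤ 0` then `D_v = ∅`. -/
theorem D_empty_of_a_nonpos (n r d a : ℤ) (hn : 0 < n) (hr : 0 ≤ r) (hd : 0 < d)
    (ha : a ≤ 0) :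
    ∀ r₁ d₁ a₁ : ℤ, ¬ memD n r d a r₁ d₁ a₁ := by
  intro r₁ d₁ a₁ h
  obtain ⟨hsq, hd₁, hd₁d, hpair, hpos⟩ := h
  unfold mukaiSq at hsq
  unfold mukaiSq mukaiPair at hpair
  have hA1 : n * d₁ ^ 2 ≤ r₁ * a₁ := by rcases hsq with h | h <;> linarith
  have hA2 : r₁ * a₁ ≤ n * d₁ ^ 2 + 1 := by rcases hsq with h | h <;> linarith
  have hpair' : 2 * n * d * d₁ - r * a₁ - r₁ * a ≤ 1 := by
    rcases hsq with h | h <;> linarith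
  have hnd : 1 ≤ n * d₁ ^ 2 := by nlinarith
  have hra : 0 < r₁ * a₁ := by linarith
  have hdd1 : d + d₁ - 1 ≤ d * d₁ := by
    nlinarith [mul_nonneg (by linarith : (0:ℤ) ≤ d - 1) (by linarith : (0:ℤ) ≤ d₁ - 1)]
  have hndd : d * d₁ ≤ n * d * d₁ ^ 2 := by
    nlinarith [mul_nonneg (mul_nonneg (by linarith : (0:ℤ) ≤ n - 1) hd.le) (sq_nonneg d₁),
      mul_nonneg (mul_pos hd hd₁).le (by linarith : (0:ℤ) ≤ d₁ - 1)]
  have hA2d : r₁ * a₁ * d ≤ (n * d₁ ^ 2 + 1) * d :=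
    mul_le_mul_of_nonneg_right hA2 hd.le
  rcases lt_trichotomy r₁ 0 with hr₁ | hr₁ | hr₁
  · -- r₁ < 0, hence a₁ < 0
    have ha₁ : a₁ < 0 := by nlinarith
    have hra₁ : r * a₁ ≤ 0 := mul_nonpos_of_nonneg_of_nonpos hr ha₁.le
    have hfac2 : r₁ * d - r * d₁ < 0 := by nlinarith [mul_nonneg hr hd₁.le]
    have hfac1 : a₁ * d - a * d₁ < 0 := by
      by_contra hc
      push_neg at hc
      nlinarith [mul_nonneg hc (by linarith : (0:ℤ) ≤ -(r₁ * d - r * d₁))]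
    have hkey : r₁ * a * d₁ + (-r₁) ≤ r₁ * a₁ * d := by
      nlinarith [mul_le_mul_of_nonneg_left
        (show (1:ℤ) ≤ a * d₁ - a₁ * d by linarith)
        (show (0:ℤ) ≤ -r₁ by linarith)]
    have hkey2 : (2 * n * d * d₁ - 1 - r * a₁) * d₁ ≤ r₁ * a * d₁ := by
      nlinarith [mul_le_mul_of_nonneg_right
        (show 2 * n * d * d₁ - 1 - r * a₁ ≤ r₁ * a by linarith) hd₁.le]
    have hmain : (-r₁) + (-(r * a₁)) * d₁ ≤ d + d₁ - n * d * d₁ ^ 2 := by nlinarith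
    have hprod : 0 ≤ (-(r * a₁)) * d₁ := mul_nonneg (by linarith) hd₁.le
    have hr₁e : r₁ = -1 := by
      have : -r₁ ≤ 1 := by linarith
      omega
    have hrae : r * a₁ = 0 := by
      nlinarith [mul_le_mul_of_nonneg_left (show (1:ℤ) ≤ d₁ by linarith)
        (show (0:ℤ) ≤ -(r * a₁) by linarith)]
    subst hr₁e
    have hd₁e : d₁ = 1 := by
      have h2 : n * d * d₁ ^ 2 ≤ d + d₁ - 1 := by nlinarith
      by_contra hc
      have hc' : 2 ≤ d₁ := by omega
      nlinarith [mul_nonneg (mul_pos hd hd₁).le (by linarith : (0:ℤ) ≤ d₁ - 2),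
        mul_pos hd hd₁,
        mul_nonneg (mul_nonneg (by linarith : (0:ℤ) ≤ n - 1) hd.le) (sq_nonneg d₁)]
    subst hd₁e
    have hne : n = 1 := by nlinarith
    subst hne
    have ha' : 2 * d - 1 ≤ -a := by linarith
    have ha₁e : a₁ = -2 := by nlinarith
    subst ha₁e
    have hre : r = 0 := by linarith
    subst hre
    rcases hsq with h | h <;> linarith
  · subst hr₁; simp at hra
  · -- r₁ > 0, hence a₁ > 0
    have ha₁ : 0 < a₁ := by nlinarith
    have hr₁a : r₁ * a ≤ 0 := mul_nonpos_of_nonneg_of_nonpos hr₁.le ha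
    have hfac1 : 0 < a₁ * d - a * d₁ := by
      nlinarith [mul_nonpos_of_nonpos_of_nonneg ha hd₁.le]
    have hfac2 : 0 < r₁ * d - r * d₁ := by
      by_contra hc
      push_neg at hc
      nlinarith [mul_nonpos_of_nonneg_of_nonpos hfac1.le hc]
    have hkey : r * a₁ * d₁ + a₁ ≤ r₁ * a₁ * d := by
      nlinarith [mul_le_mul_of_nonneg_left
        (show (1:ℤ) ≤ r₁ * d - r * d₁ by linarith)
        (show (0:ℤ) ≤ a₁ by linarith)]
    have hkey2 : (2 * n * d * d₁ - 1 - r₁ * a) * d₁ ≤ r * a₁ * d₁ := by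
      nlinarith [mul_le_mul_of_nonneg_right
        (show 2 * n * d * d₁ - 1 - r₁ * a ≤ r * a₁ by linarith) hd₁.le]
    have hmain : a₁ + (-(r₁ * a)) * d₁ ≤ d + d₁ - n * d * d₁ ^ 2 := by nlinarith
    have hprod : 0 ≤ (-(r₁ * a)) * d₁ := mul_nonneg (by linarith) hd₁.le
    have ha₁e : a₁ = 1 := by
      have : a₁ ≤ 1 := by linarith
      omega
    subst ha₁e
    have hrae : r₁ * a = 0 := by
      nlinarith [mul_le_mul_of_nonneg_left (show (1:ℤ) ≤ d₁ by linarith)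
        (show (0:ℤ) ≤ -(r₁ * a) by linarith)]
    have hae : a = 0 := by
      rcases mul_eq_zero.mp hrae with h | h
      · omega
      · exact h
    subst hae
    have hd₁e : d₁ = 1 := by
      have h2 : n * d * d₁ ^ 2 ≤ d + d₁ - 1 := by nlinarith
      by_contra hc
      have hc' : 2 ≤ d₁ := by omega
      nlinarith [mul_nonneg (mul_pos hd hd₁).le (by linarith : (0:ℤ) ≤ d₁ - 2),
        mul_pos hd hd₁,
        mul_nonneg (mul_nonneg (by linarith : (0:ℤ) ≤ n - 1) hd.le) (sq_nonneg d₁)]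
    subst hd₁e
    have hne : n = 1 := by nlinarith
    subst hne
    have hre : 2 * d - 1 ≤ r := by linarith
    have hr₁e : r₁ = 2 := by nlinarith
    subst hr₁e
    rcases hsq with h | h <;> linarith
end

section
/- Let n be a positive integer and let v = (r, d, a) be an integer triple with r ≥ 2, d > 0, a > 0 and v² = 2nd² − 2ra ≥ −2. Let v₁ = (r₁, d₁, a₁) ∈ D_v and set m = dr₁ − d₁r (which is a positive integer). Then r₁ < r, nd₁ < 2r, and, as real numbers, d₁ < 2r/(mn) + 1/√n. -/
set_option maxHeartbeats 1000000 in
/-- bounds on elements of `D_v` when `r ≥ 2`, `d, a > 0`,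
`v² ≥ −2`: with `m = dr₁ − d₁r` (a positive integer), one has `r₁ < r`,
`nd₁ < 2r`, and, as real numbers, `d₁ < 2r/(mn) + 1/√n`. -/
theorem mem_D_bounds (n r d a r₁ d₁ a₁ : ℤ) (hn : 0 < n) (hr : 2 ≤ r)
    (hd : 0 < d) (ha : 0 < a) (hv : -2 ≤ mukaiSq n r d a)
    (h : memD n r d a r₁ d₁ a₁) :
    0 < d * r₁ - d₁ * r ∧ r₁ < r ∧ n * d₁ < 2 * r ∧
      (d₁ : ℝ) < 2 * (r : ℝ) / (((d * r₁ - d₁ * r : ℤ) : ℝ) * (n : ℝ)) +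
        1 / Real.sqrt (n : ℝ) := by
  obtain ⟨hsq, hd1, hd1d, hpair, hprod⟩ := h
  rw [mukaiSq] at hsq hv
  rw [mukaiPair, mukaiSq] at hpair
  have hra : r * a ≤ n * d ^ 2 + 1 := by linarith
  have hsq_ge : n * d₁ ^ 2 ≤ r₁ * a₁ := by rcases hsq with h' | h' <;> linarith
  have hsq_le : r₁ * a₁ ≤ n * d₁ ^ 2 + 1 := by rcases hsq with h' | h' <;> linarith
  have hP1 : 2 * n * d * d₁ - r * a₁ - r₁ * a ≤ 1 := by rcases hsq with h' | h' <;> linarith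
  have hnd1 : 1 ≤ n * d₁ ^ 2 := mul_pos hn (pow_pos hd1 2)
  have h2ndd1 : 2 ≤ 2 * (n * d * d₁) := by
    have : 1 ≤ n * d * d₁ := mul_pos (mul_pos hn hd) hd1
    linarith
  have hsum : 1 ≤ r * a₁ + r₁ * a := by nlinarith
  -- Stage 1 : r₁ ≥ 1 and a₁ ≥ 1
  have hr1pos : 1 ≤ r₁ := by
    by_contra hc
    push_neg at hc
    have hr1le : r₁ ≤ 0 := by linarith
    have ha1neg : a₁ ≤ -1 := by
      rcases lt_or_eq_of_le hr1le with h' | h'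
      · by_contra hc2
        push_neg at hc2
        have : r₁ * a₁ ≤ 0 := mul_nonpos_of_nonpos_of_nonneg (by linarith) (by linarith)
        linarith
      · rw [h'] at hsq_ge; simp at hsq_ge; linarith
    have h1 : r * a₁ ≤ -2 := by nlinarith
    have h2 : r₁ * a ≤ 0 := mul_nonpos_of_nonpos_of_nonneg hr1le (by linarith)
    linarith
  have ha1pos : 1 ≤ a₁ := by
    by_contra hc
    push_neg at hc
    have : r₁ * a₁ ≤ 0 := mul_nonpos_of_nonneg_of_nonpos (by linarith) (by linarith)
    linarith
  -- Stage 2 : M ≥ 1 and A ≥ 1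
  have hMA : 1 ≤ (a₁ * d - a * d₁) * (r₁ * d - r * d₁) := hprod
  have hM1 : 1 ≤ r₁ * d - r * d₁ := by
    by_contra hc
    push_neg at hc
    have hMle : r₁ * d - r * d₁ ≤ -1 := by
      rcases lt_or_eq_of_le (by linarith : r₁ * d - r * d₁ ≤ 0) with h' | h'
      · linarith
      · rw [h'] at hMA; simp at hMA
    have hAle : a₁ * d - a * d₁ ≤ -1 := by
      by_contra hc2
      push_neg at hc2
      have h0 : 0 ≤ a₁ * d - a * d₁ := by linarith
      have : (a₁ * d - a * d₁) * (r₁ * d - r * d₁) ≤ 0 :=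
        mul_nonpos_of_nonneg_of_nonpos h0 (by linarith)
      linarith
    have hprod2 : (r₁ * d) * (a₁ * d) ≤ (r * d₁ - 1) * (a * d₁ - 1) := by
      have h1 : r₁ * d ≤ r * d₁ - 1 := by linarith
      have h2 : a₁ * d ≤ a * d₁ - 1 := by linarith
      have h3 : 0 ≤ a₁ * d := by positivity
      exact mul_le_mul h1 h2 h3 (by nlinarith)
    have hI : (r + a) * d₁ ≤ d₁ ^ 2 + 1 := by
      nlinarith [mul_le_mul_of_nonneg_right hsq_ge (sq_nonneg d),
        mul_le_mul_of_nonneg_right hra (sq_nonneg d₁)]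
    rcases le_or_gt d₁ 2 with hc2 | hc2
    · nlinarith [mul_nonneg (by linarith : (0:ℤ) ≤ d₁ - 1) (by linarith : (0:ℤ) ≤ 2 - d₁)]
    · have hsumra : r + a ≤ d₁ := by nlinarith
      have h4ra : 4 * (r * a) ≤ d₁ ^ 2 := by nlinarith [sq_nonneg (r - a)]
      have hd1d2 : d₁ ^ 2 ≤ d ^ 2 := by nlinarith
      have e0 : n * d₁ ^ 2 * d ^ 2 ≤ (r₁ * a₁) * d ^ 2 :=
        mul_le_mul_of_nonneg_right hsq_ge (sq_nonneg d)
      have e2 : (r * d₁ - 1) * (a * d₁ - 1) ≤ r * a * d₁ ^ 2 := by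
        nlinarith [mul_pos (by linarith : (0:ℤ) < r) hd1,
          mul_pos ha hd1]
      have e3 : 4 * (r * a) * d₁ ^ 2 ≤ d₁ ^ 2 * d₁ ^ 2 :=
        mul_le_mul_of_nonneg_right h4ra (sq_nonneg d₁)
      have e4 : d₁ ^ 2 * d₁ ^ 2 ≤ d₁ ^ 2 * d ^ 2 :=
        mul_le_mul_of_nonneg_left hd1d2 (sq_nonneg d₁)
      have e5 : 1 * (d₁ ^ 2 * d ^ 2) ≤ n * (d₁ ^ 2 * d ^ 2) :=
        mul_le_mul_of_nonneg_right hn (by positivity)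
      have e6 : 0 < d₁ ^ 2 * d ^ 2 := by positivity
      nlinarith [e0, hprod2, e2, e3, e4, e5, e6]
  have hA1 : 1 ≤ a₁ * d - a * d₁ := by
    by_contra hc
    push_neg at hc
    have : (a₁ * d - a * d₁) * (r₁ * d - r * d₁) ≤ 0 :=
      mul_nonpos_of_nonpos_of_nonneg (by linarith) (by linarith)
    linarith
  -- Stage 3 : rule out v₁² = 0, so r₁a₁ = nd₁² + 1, P ≤ -1
  have hra1 : r₁ * a₁ = n * d₁ ^ 2 + 1 := by
    rcases hsq with h' | h'
    · exfalso
      have hra0 : r₁ * a₁ = n * d₁ ^ 2 := by linarith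
      have hid : a₁ * (r₁ * d - r * d₁) + r₁ * (a₁ * d - a * d₁)
          = d₁ * (2 * n * d * d₁ - r * a₁ - r₁ * a) := by
        have : n * d₁ ^ 2 = r₁ * a₁ := hra0.symm
        nlinarith [this]
      have hup : a₁ * (r₁ * d - r * d₁) + r₁ * (a₁ * d - a * d₁) ≤ d₁ := by
        rw [hid]
        nlinarith
      have hx : 1 ≤ a₁ * (r₁ * d - r * d₁) :=
        mul_pos (show (0:ℤ) < a₁ by linarith) (show (0:ℤ) < r₁ * d - r * d₁ by linarith)
      have hy : 1 ≤ r₁ * (a₁ * d - a * d₁) :=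
        mul_pos (show (0:ℤ) < r₁ by linarith) (show (0:ℤ) < a₁ * d - a * d₁ by linarith)
      have hxy : d₁ ^ 2 ≤ (a₁ * (r₁ * d - r * d₁)) * (r₁ * (a₁ * d - a * d₁)) := by
        have e : (a₁ * (r₁ * d - r * d₁)) * (r₁ * (a₁ * d - a * d₁))
            = (r₁ * a₁) * ((a₁ * d - a * d₁) * (r₁ * d - r * d₁)) := by ring
        rw [e, hra0]
        nlinarith
      nlinarith [sq_nonneg (a₁ * (r₁ * d - r * d₁) - r₁ * (a₁ * d - a * d₁)),
        mul_le_mul hup hup (by linarith) (by linarith)]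
    · linarith
  have hPm1 : 2 * n * d * d₁ - r * a₁ - r₁ * a ≤ -1 := by
    rcases hsq with h' | h' <;> linarith
  -- key inequality : a₁ M + r₁ A ≤ 2d - d₁
  have hkey : a₁ * (r₁ * d - r * d₁) + r₁ * (a₁ * d - a * d₁) ≤ 2 * d - d₁ := by
    have hid : a₁ * (r₁ * d - r * d₁) + r₁ * (a₁ * d - a * d₁)
        = d₁ * (2 * n * d * d₁ - r * a₁ - r₁ * a) + 2 * d := by
      have : n * d₁ ^ 2 + 1 = r₁ * a₁ := hra1.symm
      nlinarith [this]
    rw [hid]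
    nlinarith
  have h5 : r₁ ≤ r₁ * (a₁ * d - a * d₁) := le_mul_of_one_le_right (by linarith) hA1
  -- Stage 4 : r₁ < r
  have hr1r : r₁ < r := by
    by_contra hc
    push_neg at hc
    rcases lt_or_eq_of_le hd1d with hlt | heq
    · have h1 : r * d₁ ≤ r₁ * d₁ := mul_le_mul_of_nonneg_right hc (by linarith)
      have h2 : r₁ * (d - d₁) ≤ r₁ * d - r * d₁ := by nlinarith
      have h3 : a₁ * (r₁ * (d - d₁)) ≤ a₁ * (r₁ * d - r * d₁) :=
        mul_le_mul_of_nonneg_left h2 (by linarith)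
      have h4 : (n * d₁ ^ 2 + 1) * (d - d₁) ≤ a₁ * (r₁ * d - r * d₁) := by
        have e : a₁ * (r₁ * (d - d₁)) = (n * d₁ ^ 2 + 1) * (d - d₁) := by
          rw [← hra1]; ring
        linarith
      -- (nd₁²+1)(d−d₁) + r₁ ≤ 2d − d₁, r₁ ≥ r ≥ 2, leads to contradiction
      have t1 : 0 ≤ (n - 1) * d₁ ^ 2 * (d - d₁) :=
        mul_nonneg (mul_nonneg (by linarith) (sq_nonneg d₁)) (by linarith)
      have t2 : 0 ≤ (d₁ ^ 2 - 1) * (d - d₁ - 1) :=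
        mul_nonneg (by nlinarith) (by linarith)
      nlinarith [t1, t2]
    · have hrd : r * d₁ = r * d := by rw [heq]
      have hrr1 : r + 1 ≤ r₁ := by
        by_contra hcc
        push_neg at hcc
        nlinarith [mul_nonneg (by linarith : (0:ℤ) ≤ r - r₁) hd.le]
      have h6 : d ≤ r₁ * d - r * d₁ := by nlinarith [mul_le_mul_of_nonneg_right hrr1 hd.le]
      have h7 : r₁ * d - r * d₁ ≤ a₁ * (r₁ * d - r * d₁) :=
        le_mul_of_one_le_left (by linarith) ha1pos
      linarith
  -- Stage 5 : n d₁ < 2r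
  have hrd1 : 2 ≤ r * d₁ := by
    have := mul_le_mul hr hd1 (by norm_num) (by linarith)
    linarith
  have hnd1r : n * d₁ < 2 * r := by
    by_contra hc
    push_neg at hc
    have hnd2 : 2 * r * d₁ ≤ n * d₁ ^ 2 := by nlinarith
    have hida : a₁ * (r₁ * d - r * d₁) = (n * d₁ ^ 2 + 1) * d - a₁ * (r * d₁) := by
      rw [← hra1]; ring
    have hG1 : 2 * (r * d₁) * d - d + d₁ + r₁ * (a₁ * d - a * d₁) ≤ a₁ * (r * d₁) := by
      linarith [hkey, hida, mul_le_mul_of_nonneg_right hnd2 hd.le]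
    rcases lt_or_eq_of_le hM1 with hM2 | hM2
    · have h2a : a₁ * 2 ≤ a₁ * (r₁ * d - r * d₁) :=
        mul_le_mul_of_nonneg_left (by linarith) (by linarith)
      have h2b : 2 * a₁ ≤ 2 * d - d₁ - r₁ * (a₁ * d - a * d₁) := by linarith
      have h2c : (2 * a₁) * (r * d₁) ≤ (2 * d - d₁ - r₁ * (a₁ * d - a * d₁)) * (r * d₁) :=
        mul_le_mul_of_nonneg_right h2b (by linarith)
      have f1 : 0 ≤ (r₁ * (a₁ * d - a * d₁)) * (r * d₁) :=
        mul_nonneg (by linarith) (by linarith)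
      have f2 : 0 ≤ (r * d₁ - 2) * d := mul_nonneg (by linarith) (by linarith)
      have f3 : 0 ≤ d₁ * (r * d₁) := mul_nonneg (by linarith) (by linarith)
      linarith [hG1, h2c, f1, f2, f3, h5]
    · have hMeq : r₁ * d - r * d₁ = 1 := hM2.symm
      have h2b : a₁ ≤ 2 * d - d₁ - r₁ * (a₁ * d - a * d₁) := by
        have e : a₁ * (r₁ * d - r * d₁) = a₁ := by rw [hMeq]; ring
        linarith [hkey, e]
      have h2c : a₁ * (r * d₁) ≤ (2 * d - d₁ - r₁ * (a₁ * d - a * d₁)) * (r * d₁) :=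
        mul_le_mul_of_nonneg_right h2b (by linarith)
      have h2d : 1 ≤ r₁ * r₁ * (a₁ * d - a * d₁) :=
        mul_pos (mul_pos (show (0:ℤ) < r₁ by linarith) (show (0:ℤ) < r₁ by linarith))
          (show (0:ℤ) < a₁ * d - a * d₁ by linarith)
      have f : (r₁ * (a₁ * d - a * d₁)) * (r * d₁)
          = (r₁ * r₁ * (a₁ * d - a * d₁)) * d - r₁ * (a₁ * d - a * d₁) := by
        rw [show r * d₁ = r₁ * d - 1 by linarith]; ring
      have f2 : 1 * d ≤ (r₁ * r₁ * (a₁ * d - a * d₁)) * d :=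
        mul_le_mul_of_nonneg_right h2d hd.le
      have f3 : 0 ≤ d₁ * (r * d₁) := mul_nonneg (by linarith) (by linarith)
      linarith [hG1, h2c, f, f2, f3]
  have hMgoal : 0 < d * r₁ - d₁ * r := by linarith
  refine ⟨hMgoal, hr1r, hnd1r, ?_⟩
  -- Stage 6 : real bound
  have s1 : a₁ * (r₁ * d - r * d₁) ≤ 2 * d - d₁ - r₁ := by linarith
  have s2 : r₁ * (a₁ * (r₁ * d - r * d₁)) ≤ r₁ * (2 * d - d₁ - r₁) :=
    mul_le_mul_of_nonneg_left s1 (by linarith)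
  have s3 : (r₁ * d - r * d₁) * (n * d₁ ^ 2)
      = r₁ * (a₁ * (r₁ * d - r * d₁)) - (r₁ * d - r * d₁) := by
    rw [show n * d₁ ^ 2 = r₁ * a₁ - 1 by linarith]; ring
  have s4 : 1 ≤ r₁ * d₁ := mul_pos (show (0:ℤ) < r₁ by linarith) hd1
  have s5 : 1 ≤ r₁ * r₁ := mul_pos (show (0:ℤ) < r₁ by linarith) (show (0:ℤ) < r₁ by linarith)
  have hKint : (r₁ * d - r * d₁) * (n * d₁ ^ 2) - 2 * (r * d₁) ≤ (r₁ * d - r * d₁) - 2 := by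
    nlinarith [s2, s3, s4, s5]
  -- real part
  have hnZ : (1:ℤ) ≤ n := hn
  have hnR : (1:ℝ) ≤ (n:ℝ) := by exact_mod_cast hnZ
  set s := Real.sqrt (n:ℝ) with hs
  have hs2 : s ^ 2 = (n:ℝ) := Real.sq_sqrt (by linarith)
  have hs1 : (1:ℝ) ≤ s := by
    rw [show (1:ℝ) = Real.sqrt 1 by rw [Real.sqrt_one]]
    exact Real.sqrt_le_sqrt hnR
  have hspos : (0:ℝ) < s := by linarith
  have hKR : (((r₁:ℝ)) * d - r * d₁) * ((n:ℝ) * (d₁:ℝ) ^ 2) - 2 * ((r:ℝ) * d₁)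
      ≤ (((r₁:ℝ)) * d - r * d₁) - 2 := by exact_mod_cast hKint
  have hMR : (1:ℝ) ≤ ((r₁:ℝ)) * d - r * d₁ := by exact_mod_cast hM1
  have hd1R : (1:ℝ) ≤ (d₁:ℝ) := by exact_mod_cast hd1
  have hsd1 : (1:ℝ) ≤ s * d₁ := by
    have := mul_le_mul hs1 hd1R (by norm_num) (by linarith)
    linarith
  have key : (((r₁:ℝ)) * d - r * d₁) * n * d₁ < 2 * r + (((r₁:ℝ)) * d - r * d₁) * s := by
    by_contra hcc
    push_neg at hcc
    have e1 : (0:ℝ) ≤ ((((r₁:ℝ)) * d - r * d₁) * n * d₁ - 2 * r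
        - (((r₁:ℝ)) * d - r * d₁) * s) := by linarith
    have e2 : (0:ℝ) ≤ ((((r₁:ℝ)) * d - r * d₁) * n * d₁ - 2 * r
        - (((r₁:ℝ)) * d - r * d₁) * s) * d₁ := mul_nonneg e1 (by linarith)
    have e3 : (((r₁:ℝ)) * d - r * d₁) * 1 ≤ (((r₁:ℝ)) * d - r * d₁) * (s * d₁) :=
      mul_le_mul_of_nonneg_left hsd1 (by linarith)
    linarith [hKR, e2, e3]
  push_cast
  have hdenpos : (0:ℝ) < ((d:ℝ) * r₁ - d₁ * r) * n := by
    have h0 : (0:ℝ) < (d:ℝ) * r₁ - d₁ * r := by linarith [hMR]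
    exact mul_pos h0 (by linarith)
  rw [div_add_div _ _ (ne_of_gt hdenpos) (ne_of_gt hspos),
    lt_div_iff₀ (mul_pos hdenpos hspos)]
  have e4 : (((r₁:ℝ)) * d - r * d₁) * s * s = (((r₁:ℝ)) * d - r * d₁) * n := by
    rw [show ((n:ℝ)) = s ^ 2 from hs2.symm]; ring
  have e5 := mul_lt_mul_of_pos_right key hspos
  linarith [e4, e5]
end

section
/- Let n be a positive integer and let v = (r, d, a) be an integer triple with r ≥ 2, d > 0, a > 0 and v² = 2nd² − 2ra ≥ −2. If v₁ = (r₁, d₁, a₁) ∈ D_v^{BN} and m = dr₁ − d₁r, then mnd₁ < 2r. -/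
/-- if `v₁ ∈ D_v^{BN}` and `m = dr₁ − d₁r`, then `mnd₁ < 2r`. -/
theorem mem_DBN_bound (n r d a r₁ d₁ a₁ : ℤ) (hn : 0 < n) (hr : 2 ≤ r)
    (hd : 0 < d) (ha : 0 < a) (hv : -2 ≤ mukaiSq n r d a)
    (h : memDBN n r d a r₁ d₁ a₁) :
    (d * r₁ - d₁ * r) * n * d₁ < 2 * r := by
  obtain ⟨⟨hsq, hd1, hdle, hpair, hprod⟩, hm, hmA⟩ := h
  unfold mukaiSq mukaiPair at *
  -- basic positivity facts
  have hr1 : 1 ≤ r₁ := by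
    by_contra hc
    push_neg at hc
    have h1 : d * r₁ ≤ 0 := mul_nonpos_of_nonneg_of_nonpos hd.le (by linarith)
    have h2 : 0 < d₁ * r := mul_pos hd1 (by linarith)
    linarith
  have ha1 : 1 ≤ a₁ := by
    by_contra hc
    push_neg at hc
    have h1 : d * a₁ ≤ 0 := mul_nonpos_of_nonneg_of_nonpos hd.le (by linarith)
    have h2 : 0 < d₁ * a := mul_pos hd1 ha
    linarith
  have hA1 : 1 ≤ d * a₁ - d₁ * a := by linarith
  have hnd1p : 0 < n * d₁ := mul_pos hn hd1
  have hnd1 : (0:ℤ) ≤ n * d₁ := hnd1p.le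
  rcases hsq with hE | hE
  · -- case v₁² = 0 : n d₁² = r₁ a₁
    have hE' : n * d₁ ^ 2 = r₁ * a₁ := by linarith
    have hP : 2 * n * d * d₁ - r * a₁ - r₁ * a ≤ 1 := by linarith
    have hPd1 : d₁ * (2 * n * d * d₁ - r * a₁ - r₁ * a) ≤ d₁ * 1 :=
      mul_le_mul_of_nonneg_left hP hd1.le
    have hE2 : 2 * d * (n * d₁ ^ 2) = 2 * d * (r₁ * a₁) := by rw [hE']
    have hstar : a₁ * (d * r₁ - d₁ * r) + r₁ * (d * a₁ - d₁ * a) ≤ d₁ := by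
      linarith [hPd1, hE2]
    have hstarn : (n * d₁) * (a₁ * (d * r₁ - d₁ * r) + r₁ * (d * a₁ - d₁ * a))
        ≤ (n * d₁) * d₁ := mul_le_mul_of_nonneg_left hstar hnd1
    have hI0 : n * d₁ * a₁ * (d * r₁ - d₁ * r) + n * d₁ * r₁ * (d * a₁ - d₁ * a)
        ≤ r₁ * a₁ := by linarith [hstarn, hE']
    -- n d₁ r₁ A ≥ r₁
    have ht1 : (0:ℤ) ≤ (n * d₁ * r₁) * ((d * a₁ - d₁ * a) - 1) :=
      mul_nonneg (mul_nonneg hnd1 (by linarith)) (by linarith)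
    have ht2 : (0:ℤ) ≤ (n * d₁ - 1) * r₁ :=
      mul_nonneg (by linarith) (by linarith)
    have hbig : r₁ ≤ n * d₁ * r₁ * (d * a₁ - d₁ * a) := by linarith [ht1, ht2]
    have hSlt : (d * r₁ - d₁ * r) * n * d₁ < r₁ := by
      by_contra hc
      push_neg at hc
      have hmul : a₁ * r₁ ≤ a₁ * ((d * r₁ - d₁ * r) * n * d₁) :=
        mul_le_mul_of_nonneg_left hc (by linarith)
      linarith [hmul, hI0, hbig]
    have hr1r : r₁ ≤ r := by
      by_contra hc
      push_neg at hc
      have hm2 : d₁ * (r₁ - r) ≤ d * r₁ - d₁ * r := by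
        linarith [mul_nonneg (by linarith : (0:ℤ) ≤ r₁) (by linarith : (0:ℤ) ≤ d - d₁)]
      have hm3 : (n * d₁) * (d₁ * (r₁ - r)) ≤ (n * d₁) * (d * r₁ - d₁ * r) :=
        mul_le_mul_of_nonneg_left hm2 hnd1
      have hE3 : (r₁ - r) * (n * d₁ ^ 2) = (r₁ - r) * (r₁ * a₁) := by rw [hE']
      have hu1 : (0:ℤ) ≤ (r₁ * a₁) * ((r₁ - r) - 1) :=
        mul_nonneg (mul_nonneg (by linarith) (by linarith)) (by linarith)
      have hu2 : (0:ℤ) ≤ r₁ * (a₁ - 1) := mul_nonneg (by linarith) (by linarith)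
      have : r₁ ≤ (d * r₁ - d₁ * r) * n * d₁ := by linarith [hm3, hE3, hu1, hu2]
      linarith
    linarith
  · -- case v₁² = -2 : n d₁² = r₁ a₁ - 1
    have hE' : n * d₁ ^ 2 = r₁ * a₁ - 1 := by linarith
    have hP : 2 * n * d * d₁ - r * a₁ - r₁ * a ≤ -1 := by linarith
    have hPd1 : d₁ * (2 * n * d * d₁ - r * a₁ - r₁ * a) ≤ d₁ * (-1) :=
      mul_le_mul_of_nonneg_left hP hd1.le
    have hE2 : 2 * d * (n * d₁ ^ 2) = 2 * d * (r₁ * a₁ - 1) := by rw [hE']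
    have hstar : a₁ * (d * r₁ - d₁ * r) + r₁ * (d * a₁ - d₁ * a) ≤ 2 * d - d₁ := by
      linarith [hPd1, hE2]
    have hstarn : (n * d₁) * (a₁ * (d * r₁ - d₁ * r) + r₁ * (d * a₁ - d₁ * a))
        ≤ (n * d₁) * (2 * d - d₁) := mul_le_mul_of_nonneg_left hstar hnd1
    have hI : n * d₁ * a₁ * (d * r₁ - d₁ * r) + n * d₁ * r₁ * (d * a₁ - d₁ * a)
        ≤ r * a₁ + r₁ * a - r₁ * a₁ := by linarith [hstarn, hP, hE']
    have hId1 : d₁ * (n * d₁ * a₁ * (d * r₁ - d₁ * r) + n * d₁ * r₁ * (d * a₁ - d₁ * a))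
        ≤ d₁ * (r * a₁ + r₁ * a - r₁ * a₁) := mul_le_mul_of_nonneg_left hI hd1.le
    have hEr : (r₁ * (d * a₁ - d₁ * a)) * (n * d₁ ^ 2)
        = (r₁ * (d * a₁ - d₁ * a)) * (r₁ * a₁ - 1) := by rw [hE']
    have hII' : a₁ * (n * d₁ ^ 2 * (d * r₁ - d₁ * r))
        ≤ a₁ * (d₁ * r + r₁ * d - d₁ * r₁ - (d * a₁ - d₁ * a) * r₁ ^ 2) := by
      linarith [hId1, hEr]
    have hII : n * d₁ ^ 2 * (d * r₁ - d₁ * r)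
        ≤ d₁ * r + r₁ * d - d₁ * r₁ - (d * a₁ - d₁ * a) * r₁ ^ 2 :=
      le_of_mul_le_mul_left hII' (by linarith)
    have haux : (0:ℤ) ≤ (r₁ + 1) * (d * r₁ - d₁ * r) :=
      mul_nonneg (by linarith) (by linarith)
    have ht1 : (0:ℤ) ≤ (r₁ - 1) * ((r₁ + 1) * (d * r₁ - d₁ * r) + d₁) :=
      mul_nonneg (by linarith) (by linarith)
    have ht2 : (0:ℤ) ≤ r₁ ^ 2 * ((d * a₁ - d₁ * a) - (d * r₁ - d₁ * r)) :=
      mul_nonneg (sq_nonneg r₁) (by linarith)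
    have hstep : r₁ * d - d₁ * r₁ - (d * a₁ - d₁ * a) * r₁ ^ 2 ≤ (r - 1) * d₁ := by
      linarith [ht1, ht2]
    have hfin : n * d₁ ^ 2 * (d * r₁ - d₁ * r) ≤ (2 * r - 1) * d₁ := by linarith
    have hfin2 : ((d * r₁ - d₁ * r) * n * d₁) * d₁ ≤ (2 * r - 1) * d₁ := by
      linarith [hfin]
    have := le_of_mul_le_mul_right hfin2 hd1
    linarith
end

section
/- Let n, r, d be positive integers with r ≥ 2 and n ≥ r, and set a = ⌊(nd² + 1)/r⌋. Then D_{(r,d,a)}^{BN} = ∅: no integer triple v₁ = (r₁, d₁, a₁) satisfies all of v₁² = −2 or v₁² = 0, 0 < d₁ ≤ d, ⟨(r,d,a), v₁⟩ < v₁² + 2, (a₁d − ad₁)·(r₁d − rd₁) > 0, and 0 < dr₁ − d₁r ≤ da₁ − d₁a. -/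
/-- Key auxiliary contradiction: with `x = d·r₁ − d₁·r`, `y = d·a₁ − d₁·a`,
`ρ = (nd²+1) mod r` and `ε ∈ {0,1}` (so that `v₁² = −2ε`), the identity
`d₁(ry + ax) + xy = εd² + (ρ−1)d₁²` together with the pairing bound is
impossible. -/
lemma DBN_aux (n r d a ρ d₁ x y ε : ℤ) (hr : 2 ≤ r) (hd : 1 ≤ d) (hnr : r ≤ n)
    (hra : r * a = n * d ^ 2 + 1 - ρ) (hρ0 : 0 ≤ ρ) (hρr : ρ < r) (hd1 : 1 ≤ d₁)
    (hε : ε = 0 ∨ ε = 1)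
    (key : d₁ * (r * y + a * x) + x * y = ε * d ^ 2 + (ρ - 1) * d₁ ^ 2)
    (hS : 2 * d₁ * (ρ - 1) + (2 * ε - 1) * d ≤ r * y + a * x)
    (hx : 1 ≤ x) (hxy : x ≤ y) : False := by
  have hy : 1 ≤ y := le_trans hx hxy
  -- a ≥ d²
  have h2 : r * d ^ 2 ≤ n * d ^ 2 := mul_le_mul_of_nonneg_right hnr (sq_nonneg d)
  have ha : d ^ 2 ≤ a := by
    by_contra hc
    push_neg at hc
    have h3 : r * a ≤ r * (d ^ 2 - 1) := by
      have : a ≤ d ^ 2 - 1 := by linarith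
      exact mul_le_mul_of_nonneg_left this (by linarith)
    linarith
  have hdd : d ≤ d ^ 2 := by nlinarith [sq_nonneg (d - 1)]
  have hxy1 : (1 : ℤ) ≤ x * y := by nlinarith
  -- (B')
  have hB' : d₁ * r + d₁ * a + 1 ≤ ε * d ^ 2 + (ρ - 1) * d₁ ^ 2 := by
    have t1 : 0 ≤ d₁ * r * (y - x) := by
      apply mul_nonneg (mul_nonneg (by linarith) (by linarith)); linarith
    have t2 : 0 ≤ x * (y - x) := mul_nonneg (by linarith) (by linarith)
    have t3 : 0 ≤ (x - 1) * (x + 1) := mul_nonneg (by linarith) (by linarith)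
    have t4 : 0 ≤ (x - 1) * (d₁ * r + d₁ * a) := by
      apply mul_nonneg (by linarith)
      have : 0 ≤ d₁ * r := mul_nonneg (by linarith) (by linarith)
      have : 0 ≤ d₁ * a := mul_nonneg (by linarith) (by nlinarith)
      linarith
    nlinarith [key, t1, t2, t3, t4]
  -- (A)
  have hA : x * y ≤ ε * d ^ 2 - (ρ - 1) * d₁ ^ 2 - (2 * ε - 1) * (d * d₁) := by
    have h5 : d₁ * (2 * d₁ * (ρ - 1) + (2 * ε - 1) * d) ≤ d₁ * (r * y + a * x) :=
      mul_le_mul_of_nonneg_left hS (by linarith)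
    nlinarith [key, h5]
  rcases hε with hε | hε
  · subst hε
    have h6 : (1 : ℤ) * 2 ≤ d₁ * (r + a - d) := by
      apply mul_le_mul hd1 (by linarith) (by norm_num) (by linarith)
    nlinarith [hB', hA, hxy1, h6]
  · subst hε
    rcases eq_or_lt_of_le hd1 with h1 | h1
    · -- d₁ = 1
      nlinarith [hB', ha, hρr, h1.symm]
    · -- d₁ ≥ 2
      have h7 : 2 * (r + a + d) ≤ d₁ * (r + a + d) := by
        apply mul_le_mul_of_nonneg_right (by linarith) (by nlinarith)
      nlinarith [hB', hA, hxy1, h7]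

/-- if `r ≥ 2`, `n ≥ r` and `a = ⌊(nd² + 1)/r⌋`, then
`D_{(r,d,a)}^{BN} = ∅`. -/
theorem DBN_empty_of_n_ge_r (n r d : ℤ) (hn : 0 < n) (hr : 2 ≤ r) (hd : 0 < d)
    (hnr : r ≤ n) :
    ∀ r₁ d₁ a₁ : ℤ, ¬ memDBN n r d ((n * d ^ 2 + 1) / r) r₁ d₁ a₁ := by
  intro r₁ d₁ a₁ h
  unfold memDBN memD mukaiSq mukaiPair at h
  obtain ⟨⟨hsq, hd1pos, hd1le, hpair, hprod⟩, hx, hxy⟩ := h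
  set a : ℤ := (n * d ^ 2 + 1) / r with hadef
  have hr0 : (0 : ℤ) < r := by linarith
  have hdiv : r * a + (n * d ^ 2 + 1) % r = n * d ^ 2 + 1 :=
    Int.mul_ediv_add_emod (n * d ^ 2 + 1) r
  set ρ : ℤ := (n * d ^ 2 + 1) % r with hρdef
  have hρ0 : 0 ≤ ρ := Int.emod_nonneg _ (ne_of_gt hr0)
  have hρr : ρ < r := Int.emod_lt_of_pos _ hr0
  have hra : r * a = n * d ^ 2 + 1 - ρ := by linarith
  have main : ∀ ε : ℤ, (ε = 0 ∨ ε = 1) → r₁ * a₁ = n * d₁ ^ 2 + ε → False := by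
    intro ε hε01 hE
    have key : d₁ * (r * (d * a₁ - d₁ * a) + a * (d * r₁ - d₁ * r)) +
        (d * r₁ - d₁ * r) * (d * a₁ - d₁ * a) = ε * d ^ 2 + (ρ - 1) * d₁ ^ 2 := by
      linear_combination d ^ 2 * hE - d₁ ^ 2 * hra
    have hP : 2 * n * d * d₁ - r * a₁ - r₁ * a ≤ 1 - 2 * ε := by linarith
    have hid : d * (2 * n * d * d₁ - r * a₁ - r₁ * a) =
        2 * d₁ * (ρ - 1) - (r * (d * a₁ - d₁ * a) + a * (d * r₁ - d₁ * r)) := by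
      linear_combination (-2 * d₁) * hra
    have hmul : d * (2 * n * d * d₁ - r * a₁ - r₁ * a) ≤ d * (1 - 2 * ε) :=
      mul_le_mul_of_nonneg_left hP (by linarith)
    have hS : 2 * d₁ * (ρ - 1) + (2 * ε - 1) * d ≤
        r * (d * a₁ - d₁ * a) + a * (d * r₁ - d₁ * r) := by nlinarith [hid, hmul]
    exact DBN_aux n r d a ρ d₁ (d * r₁ - d₁ * r) (d * a₁ - d₁ * a) ε hr (by linarith) hnr
      hra hρ0 hρr (by linarith) hε01 key hS (by linarith) hxy
  rcases hsq with hsq | hsq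
  · exact main 0 (Or.inl rfl) (by linarith)
  · exact main 1 (Or.inr rfl) (by linarith)
end

section
/- Let n, r, d be positive integers with r ≥ 2 and d ≥ r·⌊r/n⌋ + 2, and set a = ⌊(nd² + 1)/r⌋. Then D_{(r,d,a)}^{BN} = ∅. -/
set_option maxHeartbeats 1000000


lemma kill_u2 (n r s a d₁ : ℤ) (hr : 2 ≤ r) (hd1 : 1 ≤ d₁) (hn : 0 < n)
    (hs0 : 0 ≤ s) (hs1 : s < r) (hfr2 : r - n + 1 ≤ n * d₁)
    (hra : r * a + s = n * (r * d₁ + 2) ^ 2 + 1)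
    (hL : 2 ^ 2 + (a + r) * 2 * d₁ ≤ (r * d₁ + 2) ^ 2 + (s - 1) * d₁ ^ 2) : False := by
  have hr0 : (0:ℤ) ≤ r := by linarith
  have era : r * a = n * (r * d₁ + 2) ^ 2 + 1 - s := by linarith
  have e11 : r * a * (2 * d₁) = (n * (r * d₁ + 2) ^ 2 + 1 - s) * (2 * d₁) := by
    linear_combination (2 * d₁) * era
  have hLr := mul_le_mul_of_nonneg_left hL hr0
  have P1 : 0 ≤ (n * d₁ + n - 1 - r) * (r * d₁ + 2) ^ 2 :=
    mul_nonneg (by linarith) (sq_nonneg _)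
  have P2 : 0 ≤ (r - 1 - s) * (d₁ * (r * d₁ + 2)) := by
    refine mul_nonneg (by linarith) ?_
    refine mul_nonneg (by linarith) (by nlinarith only [hr, hd1])
  have P3 : 0 ≤ (r * d₁ + 2) * (n * r * d₁ * (d₁ - 1)) := by
    refine mul_nonneg (by nlinarith only [hr, hd1]) ?_
    exact mul_nonneg (mul_nonneg (mul_nonneg (by linarith) hr0) (by linarith)) (by linarith)
  have P4 : 0 ≤ (r * d₁ + 2) * (2 * n * d₁ - 2 * n) := by
    refine mul_nonneg (by nlinarith only [hr, hd1]) ?_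
    nlinarith only [hn, hd1]
  have t1 : 0 ≤ r * d₁ := by positivity
  have t2 : 0 ≤ r * d₁ ^ 2 := by positivity
  have t3 : 0 ≤ r ^ 2 * d₁ := by positivity
  linarith only [hLr, e11, P1, P2, P3, P4, t1, t2, t3, hr0, hd1]

lemma kill_u3 (n r s a : ℤ) (hr : 2 ≤ r) (hn : 0 < n)
    (hs0 : 0 ≤ s) (hs1 : s < r) (h2n : r + 1 ≤ 2 * n)
    (hra : r * a + s = n * (r + 3) ^ 2 + 1)
    (hL : 3 ^ 2 + (a + r) * 3 * 1 ≤ (r + 3) ^ 2 + (s - 1) * 1 ^ 2) : False := by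
  have hr0 : (0:ℤ) ≤ r := by linarith
  have hn2 : 2 ≤ n := by omega
  have era : r * a = n * (r + 3) ^ 2 + 1 - s := by linarith
  have e11 : r * a * 3 = (n * (r + 3) ^ 2 + 1 - s) * 3 := by
    linear_combination 3 * era
  have hLr := mul_le_mul_of_nonneg_left hL hr0
  have Q1 : 0 ≤ (3 * n - r - 3) * (r + 3) ^ 2 :=
    mul_nonneg (by linarith) (sq_nonneg _)
  have Q2 : 0 ≤ (r - 1 - s) * (r + 3) := mul_nonneg (by linarith) (by linarith)
  linarith only [hLr, e11, Q1, Q2, hr0, sq_nonneg r, hr]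

lemma kill_q1 (n r s a d₁ : ℤ) (hr : 2 ≤ r) (hd1 : 1 ≤ d₁) (hn : 0 < n)
    (hs0 : 0 ≤ s) (hs1 : s < r) (hnd1 : r + 1 ≤ n * d₁)
    (hra : r * a + s = n * (1 + r * d₁) ^ 2 + 1)
    (hL : 1 ^ 2 + (a + r) * 1 * d₁ ≤ (1 + r * d₁) ^ 2 + (s - 1) * d₁ ^ 2) : False := by
  have hr0 : (0:ℤ) ≤ r := by linarith
  have era : r * a = n * (1 + r * d₁) ^ 2 + 1 - s := by linarith
  have e11 : r * a * d₁ = (n * (1 + r * d₁) ^ 2 + 1 - s) * d₁ := by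
    linear_combination d₁ * era
  have hLr := mul_le_mul_of_nonneg_left hL hr0
  have R1 : 0 ≤ (n * d₁ - r - 1) * (1 + r * d₁) ^ 2 :=
    mul_nonneg (by linarith) (sq_nonneg _)
  have R2 : 0 ≤ (r - 1 - s) * (d₁ * (1 + r * d₁)) := by
    refine mul_nonneg (by linarith) ?_
    refine mul_nonneg (by linarith) (by nlinarith only [hr, hd1])
  have t1 : 0 ≤ r * d₁ := by positivity
  have t2 : 0 ≤ r * d₁ ^ 2 := by positivity
  have t3 : 0 ≤ r ^ 2 * d₁ := by positivity
  linarith only [hLr, e11, R1, R2, t1, t2, t3, hd1, hr0]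

lemma kill_q2 (n r s a d₁ d : ℤ) (hr : 2 ≤ r) (hd : 0 < d) (hd1 : 3 ≤ d₁) (hn : 0 < n)
    (hs0 : 0 ≤ s) (hs1 : s < r) (h2d : d * 2 = 1 + r * d₁)
    (hg0 : 2 ≤ n * d₁ - r) (hg : 4 * (r - 2) ≤ (n * d₁ - r) * r)
    (hra : r * a + s = n * d ^ 2 + 1)
    (hL : 1 ^ 2 + (a + r) * 1 * d₁ ≤ d ^ 2 + (s - 1) * d₁ ^ 2) : False := by
  have hr0 : (0:ℤ) ≤ r := by linarith
  have e9a : 4 * (r - 2) * d₁ ≤ (n * d₁ - r) * r * d₁ :=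
    mul_le_mul_of_nonneg_right hg (by linarith)
  have e9b : (n * d₁ - r) * (2 * d) = (n * d₁ - r) * (1 + r * d₁) := by
    linear_combination (n * d₁ - r) * h2d
  have e9 : 4 * (r - 2) * d₁ ≤ (n * d₁ - r) * (2 * d) := by
    nlinarith only [e9a, e9b, hg0]
  have e10 : 4 * (r - 2) * d₁ * d ≤ (n * d₁ - r) * (2 * d) * d :=
    mul_le_mul_of_nonneg_right e9 (by linarith)
  have era : r * a = n * d ^ 2 + 1 - s := by linarith
  have e11 : r * a * d₁ = (n * d ^ 2 + 1 - s) * d₁ := by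
    linear_combination d₁ * era
  have e6 : (s - 1) * (d₁ * (1 + r * d₁)) = 2 * ((s - 1) * (d₁ * d)) := by
    linear_combination (1 - s) * d₁ * h2d
  have hLr := mul_le_mul_of_nonneg_left hL hr0
  have P2 : 0 ≤ (r - 1 - s) * (d₁ * d) :=
    mul_nonneg (by linarith) (by positivity)
  have t3 : 0 ≤ r ^ 2 * d₁ := by positivity
  linarith only [hLr, e11, e6, e10, P2, t3, hr0, hr]

lemma main_contra (n r d a s d₁ u q : ℤ) (hn : 0 < n) (hr : 2 ≤ r) (hd : 0 < d)
    (hdb : r * (r / n) + 2 ≤ d) (hra : r * a + s = n * d ^ 2 + 1)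
    (hs0 : 0 ≤ s) (hs1 : s < r) (hd1 : 1 ≤ d₁) (hd1d : d₁ ≤ d)
    (hu : 1 ≤ u) (hq : d * q = u + r * d₁) (hq1 : 1 ≤ q) (had : d ≤ a)
    (hL : u ^ 2 + (a + r) * u * d₁ ≤ d ^ 2 + (s - 1) * d₁ ^ 2)
    (hW : u ^ 2 + d * d₁ + (s - 1) * d₁ ^ 2 ≤ d ^ 2) : False := by
  have hr0 : (0:ℤ) ≤ r := by linarith
  have hud1 : 1 ≤ u * d₁ := by nlinarith only [hu, hd1]
  have epos1 : 0 < 2 * r * u ^ 2 := by positivity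
  have epos2 : 0 < r * d * d₁ := by positivity
  have epos3 : 0 < (r ^ 2 - r + 2) * (u * d₁) := by
    nlinarith only [sq_nonneg (r - 1), hud1, hr]
  have epos4 : 0 ≤ (r - 2) * (u * d₁) := mul_nonneg (by linarith) (by linarith)
  have hD3 : 2 * r * u ^ 2 + (r * a) * (u * d₁) + r ^ 2 * (u * d₁) + r * d * d₁ ≤ 2 * r * d ^ 2 := by
    have h2 := mul_le_mul_of_nonneg_left hL hr0
    have h3 := mul_le_mul_of_nonneg_left hW hr0
    nlinarith only [h2, h3]
  have h4 : n * d ^ 2 + 2 - r ≤ r * a := by linarith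
  have h5 : (n * d ^ 2 + 2 - r) * (u * d₁) ≤ (r * a) * (u * d₁) :=
    mul_le_mul_of_nonneg_right h4 (by linarith)
  rcases le_or_gt n r with hnr | hnr
  · -- n ≤ r
    have hf1 : 1 ≤ r / n := by rw [Int.le_ediv_iff_mul_le hn]; linarith
    have hmod := Int.mul_ediv_add_emod r n
    have hm0 : 0 ≤ r % n := Int.emod_nonneg r (ne_of_gt hn)
    have hm1 : r % n < n := Int.emod_lt_of_pos r hn
    set f := r / n with hf
    have hf0 : (0:ℤ) ≤ f := by linarith
    have hfr : n * f ≤ r := by linarith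
    have hfr2 : r - n + 1 ≤ n * f := by linarith
    have hD4 : n * (u * d₁) ≤ 2 * r - 1 := by
      have h6 : n * d ^ 2 * (u * d₁) < 2 * r * d ^ 2 := by
        linarith only [hD3, h5, epos1, epos2, epos3]
      by_contra hcon
      push_neg at hcon
      have h7 : 2 * r ≤ n * (u * d₁) := by linarith
      have h8 := mul_le_mul_of_nonneg_right h7 (sq_nonneg d)
      nlinarith only [h6, h8]
    have hD8 : u * d₁ ≤ 2 * f + 1 := by
      by_contra hcon
      push_neg at hcon
      have h7 : 2 * f + 2 ≤ u * d₁ := by linarith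
      have h8 := mul_le_mul_of_nonneg_left h7 (le_of_lt hn)
      linarith only [h8, hD4, hfr2]
    rcases le_or_gt 2 u with hu2 | hu1
    · -- u ≥ 2
      have h9 : 2 * d₁ ≤ u * d₁ := mul_le_mul_of_nonneg_right hu2 (by linarith)
      have hd1f : d₁ ≤ f := by
        have h9' : 2 * d₁ ≤ 2 * f + 1 := by linarith only [h9, hD8]
        omega
      have h10 : r * d₁ ≤ r * f := mul_le_mul_of_nonneg_left hd1f hr0
      have hrd1 : r * d₁ ≤ d - 2 := by linarith only [h10, hdb]
      have hd1d2 : d₁ ≤ d - 2 := by nlinarith only [hrd1, hr, hd1]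
      have hud : u ≤ d - 1 := by
        by_contra hcon
        push_neg at hcon
        have h11 : d ^ 2 ≤ u ^ 2 := by
          nlinarith only [mul_nonneg (by linarith : (0:ℤ) ≤ u - d) (by linarith : (0:ℤ) ≤ u + d)]
        linarith only [hW, h11, mul_nonneg hs0 (sq_nonneg d₁),
          mul_pos (show (0:ℤ) < d₁ by linarith) (show (0:ℤ) < d - d₁ by linarith)]
      have hqe : q = 1 := by
        by_contra hcon
        have h12 : 2 ≤ q := by omega
        have h13 : d * 2 ≤ d * q := mul_le_mul_of_nonneg_left h12 (by linarith)
        linarith only [hq, hud, hrd1, h13]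
      have hdu : d = u + r * d₁ := by rw [hqe] at hq; linarith
      rcases lt_or_ge n 2 with hn1 | hn2
      · -- n = 1
        have hn1' : n = 1 := by omega
        subst hn1'
        have hfr' : f = r := by omega
        have h14 : r * r + 2 - r * d₁ ≤ u := by
          have h14a := hdb
          rw [hfr'] at h14a
          linarith only [h14a, hdu]
        have h15 : 0 ≤ (r - d₁) * (r * d₁ - 2) := by
          refine mul_nonneg ?_ (by nlinarith only [hr, hd1])
          rw [hfr'] at hd1f; linarith
        have h16 := mul_le_mul_of_nonneg_right h14 (by linarith : (0:ℤ) ≤ d₁)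
        have hD4' : u * d₁ ≤ 2 * r - 1 := by linarith only [hD4]
        nlinarith only [h15, h16, hD4']
      · -- n ≥ 2
        have hf2 : 2 * f ≤ r := by nlinarith only [hfr, hn2, hf0]
        rcases lt_or_ge d₁ f with hdlt | hdge
        · -- d₁ ≤ f - 1 : impossible
          have h17 : r * (f - d₁) + 2 ≤ u := by linarith only [hdu, hdb]
          have h18 : r + 2 ≤ u := by
            have h18a : r * 1 ≤ r * (f - d₁) := mul_le_mul_of_nonneg_left (by omega) hr0
            linarith only [h17, h18a]
          have h19 : u ≤ u * d₁ := by nlinarith only [hu, hd1]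
          linarith only [hD8, hf2, h18, h19]
        · -- d₁ = f
          have hde : d₁ = f := le_antisymm hd1f hdge
          have hdb' : r * d₁ + 2 ≤ d := by rw [hde]; exact hdb
          have hfr2' : r - n + 1 ≤ n * d₁ := by rw [hde]; exact hfr2
          rw [← hde] at hD8
          rcases lt_or_ge u 3 with hu3 | hu3
          · -- u = 2, d = r*d₁ + 2
            have hue : u = 2 := by omega
            subst hue
            have hd_eq : d = r * d₁ + 2 := by linarith only [hdu]
            subst hd_eq
            exact kill_u2 n r s a d₁ hr hd1 hn hs0 hs1 hfr2' hra hL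
          · -- u = 3, d₁ = f = 1, d = r + 3
            have h20 : 3 * d₁ ≤ u * d₁ := mul_le_mul_of_nonneg_right hu3 (by linarith)
            have hd1e : d₁ = 1 := by
              have h20' : 3 * d₁ ≤ 2 * d₁ + 1 := by linarith only [h20, hD8]
              omega
            have hfe : f = 1 := by omega
            subst hd1e
            have hue : u = 3 := by
              have := hD8; omega
            subst hue
            have hd_eq : d = r + 3 := by linarith only [hdu]
            subst hd_eq
            have h2n : r + 1 ≤ 2 * n := by
              rw [hfe, mul_one] at hmod
              omega
            exact kill_u3 n r s a hr hn hs0 hs1 h2n hra hL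
    · -- u = 1
      have hue : u = 1 := by omega
      subst hue
      have hd82 : d₁ ≤ 2 * f + 1 := by linarith only [hD8]
      have hq2 : q ≤ 2 := by
        by_contra hcon
        have h12 : 3 ≤ q := by omega
        have h13 : d * 3 ≤ d * q := mul_le_mul_of_nonneg_left h12 (by linarith)
        have h14 : r * d₁ ≤ r * (2 * f + 1) := mul_le_mul_of_nonneg_left hd82 hr0
        have h15 : 0 ≤ r * (f - 1) := mul_nonneg hr0 (by linarith)
        linarith only [hq, hdb, h13, h14, h15]
      interval_cases q
      · -- q = 1 : d = 1 + r*d₁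
        have hd_eq : d = 1 + r * d₁ := by linarith only [hq]
        subst hd_eq
        have hfd1 : f + 1 ≤ d₁ := by
          by_contra hcon
          push_neg at hcon
          have h16 : r * d₁ ≤ r * f := mul_le_mul_of_nonneg_left (by omega) hr0
          linarith only [h16, hdb]
        have hnd1 : r + 1 ≤ n * d₁ := by
          have h16 : n * (f + 1) ≤ n * d₁ := mul_le_mul_of_nonneg_left hfd1 (by linarith)
          nlinarith only [hfr2, h16]
        exact kill_q1 n r s a d₁ hr hd1 hn hs0 hs1 hnd1 hra hL
      · -- q = 2 : 2d = 1 + r*d₁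
        have h2d : d * 2 = 1 + r * d₁ := by linarith only [hq]
        have hfd1 : 2 * f + 1 ≤ d₁ := by
          by_contra hcon
          push_neg at hcon
          have h16 : r * d₁ ≤ r * (2 * f) := mul_le_mul_of_nonneg_left (by omega) hr0
          linarith only [h16, hdb, h2d]
        have hde : d₁ = 2 * f + 1 := le_antisymm hd82 hfd1
        have h3d1 : 3 ≤ d₁ := by omega
        have hnd1 : 2 * r - n + 2 ≤ n * d₁ := by
          have h16 : n * (2 * f + 1) ≤ n * d₁ := by rw [hde]
          nlinarith only [hfr2, h16]
        have hg0 : 2 ≤ n * d₁ - r := by linarith only [hnd1, hnr]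
        have hnd3 : 3 * n ≤ n * d₁ := by nlinarith only [h3d1, hn]
        have hg : 4 * (r - 2) ≤ (n * d₁ - r) * r := by
          rcases le_or_gt n (r - 2) with h | h
          · have h17 : 4 ≤ n * d₁ - r := by linarith only [hnd1, h]
            nlinarith only [h17, hr]
          · have h18 : 2 * r - 3 ≤ n * d₁ - r := by linarith only [hnd3, h]
            nlinarith only [h18, sq_nonneg (2 * r - 4), hr]
        exact kill_q2 n r s a d₁ d hr hd h3d1 hn hs0 hs1 h2d hg0 hg hra hL
  · -- r < n
    have had2 : d ^ 2 ≤ a := by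
      by_contra hcon
      push_neg at hcon
      have h10 : r * a ≤ r * (d ^ 2 - 1) := mul_le_mul_of_nonneg_left (by linarith) hr0
      have h11 := mul_le_mul_of_nonneg_right (by linarith : r + 1 ≤ n) (sq_nonneg d)
      nlinarith only [h10, h11, hra, hs1, sq_nonneg d]
    have hud1' : u * d₁ ≤ 1 := by
      by_contra hcon
      push_neg at hcon
      have h11 : 2 ≤ u * d₁ := by linarith
      have h12 := mul_le_mul_of_nonneg_right had2 (by linarith : (0:ℤ) ≤ u * d₁)
      have h13 := mul_le_mul_of_nonneg_left h11 (sq_nonneg d)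
      have e4 : 2 * d ^ 2 ≤ a * (u * d₁) := by linarith only [h12, h13]
      have e5 := mul_le_mul_of_nonneg_left e4 hr0
      linarith only [hD3, e5, epos1, epos2, epos3, epos4]
    have hu1 : u = 1 := by
      have h14 : u * 1 ≤ u * d₁ := mul_le_mul_of_nonneg_left hd1 (by linarith)
      nlinarith only [h14, hud1', hu]
    have hd11 : d₁ = 1 := by
      have h14 : 1 * d₁ ≤ u * d₁ := mul_le_mul_of_nonneg_right hu (by linarith)
      nlinarith only [h14, hud1', hd1]
    rw [hu1, hd11] at hL
    nlinarith only [hL, had2, hs1, hr]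

/-- if `r ≥ 2`, `d ≥ r⌊r/n⌋ + 2` and `a = ⌊(nd² + 1)/r⌋`, then
`D_{(r,d,a)}^{BN} = ∅`. -/
theorem DBN_empty_of_d_large (n r d : ℤ) (hn : 0 < n) (hr : 2 ≤ r) (hd : 0 < d)
    (hdb : r * (r / n) + 2 ≤ d) :
    ∀ r₁ d₁ a₁ : ℤ, ¬ memDBN n r d ((n * d ^ 2 + 1) / r) r₁ d₁ a₁ := by
  intro r₁ d₁ a₁ hmem
  obtain ⟨⟨hsq, hd₁pos, hd₁le, hpair, hprod⟩, hu0, huv0⟩ := hmem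
  set a : ℤ := (n * d ^ 2 + 1) / r with ha
  have hr0 : (0:ℤ) < r := by linarith
  have hra : r * a + (n * d ^ 2 + 1) % r = n * d ^ 2 + 1 := Int.mul_ediv_add_emod _ _
  set s : ℤ := (n * d ^ 2 + 1) % r with hs
  have hs0 : 0 ≤ s := Int.emod_nonneg _ (ne_of_gt hr0)
  have hs1 : s < r := Int.emod_lt_of_pos _ hr0
  have hd2 : 2 ≤ d := by
    have h0 : 0 ≤ r * (r / n) :=
      mul_nonneg (by linarith) (Int.ediv_nonneg (by linarith) (by linarith))
    linarith
  have had : d ≤ a := by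
    rcases le_or_gt n r with h | h
    · have hf1 : 1 ≤ r / n := by rw [Int.le_ediv_iff_mul_le hn]; linarith
      have hd3 : r + 2 ≤ d := by nlinarith only [hdb, hf1, hr0]
      have e1 : (r + 2) * d ≤ d * d := mul_le_mul_of_nonneg_right hd3 (by linarith)
      have e2 : d * d ≤ n * d ^ 2 := by nlinarith only [hn, sq_nonneg d]
      have e3 : r * d < r * a := by linarith only [hra, hs1, e1, e2, hd3, hr0]
      exact ((mul_lt_mul_iff_right₀ hr0).mp e3).le
    · have e2 : (r + 1) * d ^ 2 ≤ n * d ^ 2 :=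
        mul_le_mul_of_nonneg_right (by linarith) (sq_nonneg d)
      have e4 : 0 ≤ r * d * (d - 2) :=
        mul_nonneg (mul_nonneg (by linarith) (by linarith)) (by linarith)
      have e3 : r * d < r * a := by nlinarith only [hra, hs1, e2, e4, hd2, hr0, sq_nonneg d]
      exact ((mul_lt_mul_iff_right₀ hr0).mp e3).le
  set u : ℤ := d * r₁ - d₁ * r with hudef
  set v : ℤ := d * a₁ - d₁ * a with hvdef
  have hu1 : 1 ≤ u := hu0
  have huv : u ≤ v := huv0
  have hv1 : 1 ≤ v := le_trans hu1 huv
  have hq : d * r₁ = u + r * d₁ := by rw [hudef]; ring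
  have hq1 : 1 ≤ r₁ := by
    by_contra hcon
    push_neg at hcon
    have h1 : d * r₁ ≤ 0 := mul_nonpos_of_nonneg_of_nonpos (by linarith) (by omega)
    have h2 : 0 < r * d₁ := mul_pos hr0 hd₁pos
    linarith only [h1, h2, hq, hu1]
  simp only [mukaiSq, mukaiPair] at hsq hpair
  have hkey : a * u + r * v = 2 * (s - 1) * d₁ - d * (2 * n * d * d₁ - r * a₁ - r₁ * a) := by
    rw [hudef, hvdef]; linear_combination (-2 * d₁) * hra
  rcases hsq with hc0 | hc1
  · -- ε = 0
    have he : r₁ * a₁ = n * d₁ ^ 2 := by linarith only [hc0]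
    have hE : u * v + d₁ * (a * u + r * v) = (s - 1) * d₁ ^ 2 := by
      rw [hudef, hvdef]; linear_combination d ^ 2 * he - d₁ ^ 2 * hra
    have hP : 2 * n * d * d₁ - r * a₁ - r₁ * a ≤ 1 := by linarith only [hpair, he]
    have hF : 2 * (s - 1) * d₁ - d ≤ a * u + r * v := by
      have h3 := mul_le_mul_of_nonneg_left hP (le_of_lt hd)
      linarith only [hkey, h3]
    have m1 : 1 ≤ u * v := by nlinarith only [hu1, hv1]
    have m2 : a + r ≤ a * u + r * v := by
      nlinarith only [hu1, hv1, had, hd2, hr0]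
    have m3 := mul_le_mul_of_nonneg_left hF (le_of_lt hd₁pos)
    have m4 := mul_le_mul_of_nonneg_left m2 (le_of_lt hd₁pos)
    have m5 : 2 * d₁ ≤ (a + r - d) * d₁ :=
      mul_le_mul_of_nonneg_right (by linarith only [had, hr]) (le_of_lt hd₁pos)
    linarith only [hE, m1, m3, m4, m5, hd₁pos]
  · -- ε = 1
    have he : r₁ * a₁ = n * d₁ ^ 2 + 1 := by linarith only [hc1]
    have hE : u * v + d₁ * (a * u + r * v) = d ^ 2 + (s - 1) * d₁ ^ 2 := by
      rw [hudef, hvdef]; linear_combination d ^ 2 * he - d₁ ^ 2 * hra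
    have hP : 2 * n * d * d₁ - r * a₁ - r₁ * a ≤ -1 := by linarith only [hpair, he]
    have hF : 2 * (s - 1) * d₁ + d ≤ a * u + r * v := by
      have h3 := mul_le_mul_of_nonneg_left hP (le_of_lt hd)
      linarith only [hkey, h3]
    have m3 := mul_le_mul_of_nonneg_left hF (le_of_lt hd₁pos)
    have m6 : u * u ≤ u * v := mul_le_mul_of_nonneg_left huv (by linarith)
    have hW : u ^ 2 + d * d₁ + (s - 1) * d₁ ^ 2 ≤ d ^ 2 := by
      nlinarith only [hE, m3, m6]
    have m7 : r * u ≤ r * v := mul_le_mul_of_nonneg_left huv (by linarith)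
    have m9 := mul_le_mul_of_nonneg_left m7 (le_of_lt hd₁pos)
    have hL : u ^ 2 + (a + r) * u * d₁ ≤ d ^ 2 + (s - 1) * d₁ ^ 2 := by
      nlinarith only [hE, m6, m9]
    exact main_contra n r d a s d₁ u r₁ hn hr hd hdb hra hs0 hs1 hd₁pos hd₁le hu1 hq hq1 had hL hW
end

section
/- Let n be a positive integer, r ≥ 2 an integer, and m, d₁ positive integers. Set d = m + rd₁, a₁ = nd₁² + 1, and a = ⌊(nd² + 1)/r⌋. If m ≤ da₁ − ad₁, then nmd₁ ≤ r. -/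
/-- key numerical estimate. With `d = m + rd₁`, `a₁ = nd₁² + 1`,
`a = ⌊(nd² + 1)/r⌋`: if `m ≤ da₁ − ad₁`, then `nmd₁ ≤ r`. -/
theorem rank_one_estimate (n r m d₁ : ℤ) (hn : 0 < n) (hr : 2 ≤ r)
    (hm : 0 < m) (hd₁ : 0 < d₁)
    (h : m ≤ (m + r * d₁) * (n * d₁ ^ 2 + 1) -
        ((n * (m + r * d₁) ^ 2 + 1) / r) * d₁) :
    n * m * d₁ ≤ r := by
  set x := n * (m + r * d₁) ^ 2 + 1 with hx
  have h0 : (0:ℤ) < r := by linarith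
  have hdm : r * (x / r) + x % r = x := Int.mul_ediv_add_emod x r
  have hmod1 : x % r < r := Int.emod_lt_of_pos x h0
  have hmod0 : 0 ≤ x % r := Int.emod_nonneg x (by linarith)
  by_contra hc
  push_neg at hc
  have hc' : r + 1 ≤ n * m * d₁ := hc
  have hrm : r * m ≤ r * ((m + r * d₁) * (n * d₁ ^ 2 + 1) - (x / r) * d₁) :=
    mul_le_mul_of_nonneg_left h (by linarith)
  nlinarith [mul_le_mul_of_nonneg_left hmod1.le hd₁.le,
    mul_le_mul_of_nonneg_right hc' (by positivity : (0:ℤ) ≤ m + r * d₁),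
    mul_pos h0 hm]
end

section
/- Let n be a positive integer and let v = (r, d, a) be an integer triple with r ≥ 2, d > 0, a ≥ 2, v² = 2nd² − 2ra ≥ −2, and d ≥ r·⌊2r/n⌋ + r. If n = 1, assume in addition that 2d ≥ 2a + r. Then D_v = ∅. -/
set_option maxHeartbeats 1000000 in
/-- if `r ≥ 2`, `d > 0`, `a ≥ 2`, `v² ≥ −2`,
`d ≥ r⌊2r/n⌋ + r`, and additionally `2d ≥ 2a + r` when `n = 1`, then
`D_v = ∅`. -/
theorem D_empty_of_d_large (n r d a : ℤ) (hn : 0 < n) (hr : 2 ≤ r)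
    (hd : 0 < d) (ha : 2 ≤ a) (hv : -2 ≤ mukaiSq n r d a)
    (hdb : r * (2 * r / n) + r ≤ d)
    (hn1 : n = 1 → 2 * a + r ≤ 2 * d) :
    ∀ r₁ d₁ a₁ : ℤ, ¬ memD n r d a r₁ d₁ a₁ := by
  intro r₁ d₁ a₁ hmem
  obtain ⟨hsq, hd1, hd1d, hpair, hprod⟩ := hmem
  simp only [mukaiSq, mukaiPair] at hsq hpair hv
  -- basic facts about F = ⌊2r/n⌋
  set F : ℤ := 2 * r / n with hF
  have hFd : n * F + 2 * r % n = 2 * r := Int.mul_ediv_add_emod (2 * r) n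
  have hm0 : 0 ≤ 2 * r % n := Int.emod_nonneg _ (ne_of_gt hn)
  have hm1 : 2 * r % n < n := Int.emod_lt_of_pos _ hn
  have hF1 : n * F ≤ 2 * r := by omega
  have hF2 : 2 * r < n * F + n := by omega
  have hdF : r * F + r ≤ d := hdb
  have hra : r * a ≤ n * d ^ 2 + 1 := by linarith only [hv]
  have hndd1 : 0 < n * d * d₁ := mul_pos (mul_pos hn hd) hd1
  have hnd1 : (0:ℤ) < n * d₁ := mul_pos hn hd1
  rcases hsq with hs | hs
  · -- case v₁² = 0 : r₁a₁ = n d₁²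
    have hP : r₁ * a₁ = n * d₁ ^ 2 := by linarith only [hs]
    have hPpos : 0 < r₁ * a₁ := by rw [hP]; exact mul_pos hn (pow_pos hd1 2)
    rcases mul_pos_iff.mp hPpos with ⟨hr1, ha1⟩ | ⟨hr1, ha1⟩
    · -- r₁ > 0, a₁ > 0
      have hxpos : 0 < r * a₁ := mul_pos (by linarith only [hr]) ha1
      have hypos : 0 < r₁ * a := mul_pos hr1 (by linarith only [ha])
      have hK : (0:ℤ) < r * a * d₁ + 2 := by
        have h := mul_pos (mul_pos (show (0:ℤ) < r by linarith only [hr])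
          (show (0:ℤ) < a by linarith only [ha])) hd1
        linarith only [h]
      rcases mul_pos_iff.mp hprod with ⟨he1, he2⟩ | ⟨he1, he2⟩
      · -- both slope differences positive
        have hyd : r * a * d₁ + 2 ≤ r₁ * a * d := by
          linarith only [ha, mul_le_mul_of_nonneg_left
            (show (1:ℤ) ≤ r₁ * d - r * d₁ by linarith only [he2])
            (show (0:ℤ) ≤ a by linarith only [ha])]
        have hxd : r * a * d₁ + 2 ≤ r * a₁ * d := by
          linarith only [hr, mul_le_mul_of_nonneg_left
            (show (1:ℤ) ≤ a₁ * d - a * d₁ by linarith only [he1])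
            (show (0:ℤ) ≤ r by linarith only [hr])]
        have h1 : (r * a₁) * (r * a * d₁ + 2) ≤ (r * a₁) * (r₁ * a * d) :=
          mul_le_mul_of_nonneg_left hyd hxpos.le
        have h2 : (r * a₁) * (r₁ * a * d) = r * a * (n * d₁ ^ 2) * d := by
          linear_combination (r * a * d) * hP
        have h3 : r * a * (n * d₁ ^ 2) * d < (n * d * d₁) * (r * a * d₁ + 2) := by
          linarith only [hndd1]
        have hx : r * a₁ < n * d * d₁ :=
          lt_of_mul_lt_mul_right (by linarith only [h1, h2, h3]) hK.le
        have h1' : (r₁ * a) * (r * a * d₁ + 2) ≤ (r₁ * a) * (r * a₁ * d) :=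
          mul_le_mul_of_nonneg_left hxd hypos.le
        have h2' : (r₁ * a) * (r * a₁ * d) = r * a * (n * d₁ ^ 2) * d := by
          linear_combination (r * a * d) * hP
        have hy : r₁ * a < n * d * d₁ :=
          lt_of_mul_lt_mul_right (by linarith only [h1', h2', h3]) hK.le
        linarith only [hpair, hs, hx, hy]
      · -- both slope differences negative
        have hxd : r * a₁ * d + 2 ≤ r * a * d₁ := by
          linarith only [hr, mul_le_mul_of_nonneg_left
            (show (1:ℤ) ≤ a * d₁ - a₁ * d by linarith only [he1])
            (show (0:ℤ) ≤ r by linarith only [hr])]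
        have hyd : r₁ * a * d + 2 ≤ r * a * d₁ := by
          linarith only [ha, mul_le_mul_of_nonneg_left
            (show (1:ℤ) ≤ r * d₁ - r₁ * d by linarith only [he2])
            (show (0:ℤ) ≤ a by linarith only [ha])]
        have hrad1 : r * a * d₁ ≤ (n * d ^ 2 + 1) * d₁ :=
          mul_le_mul_of_nonneg_right hra hd1.le
        have hx : r * a₁ ≤ n * d * d₁ := by
          have hxd' : (r * a₁) * d < (n * d * d₁ + 1) * d := by
            linarith only [hxd, hrad1, hd1d]
          have h := lt_of_mul_lt_mul_right hxd' hd.le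
          linarith only [h]
        have hy : r₁ * a ≤ n * d * d₁ := by
          have hyd' : (r₁ * a) * d < (n * d * d₁ + 1) * d := by
            linarith only [hyd, hrad1, hd1d]
          have h := lt_of_mul_lt_mul_right hyd' hd.le
          linarith only [h]
        have hsum : 2 * (n * d * d₁) - 1 ≤ r * a₁ + r₁ * a := by
          linarith only [hpair, hs]
        have h3 : (r * a * d₁) * (n * d₁) = (r * a₁) * (r₁ * a) := by
          linear_combination (-(r * a)) * hP
        rcases le_or_gt (n * d * d₁) (r * a₁) with hxM | hxM
        · -- r*a₁ = n*d*d₁, use hxd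
          have hxe : r * a₁ = n * d * d₁ := le_antisymm hx hxM
          have h2 : (r * a₁ * d + 2) * (n * d₁) ≤ (r * a * d₁) * (n * d₁) :=
            mul_le_mul_of_nonneg_right hxd hnd1.le
          have h4 : (r * a₁) * (r₁ * a) ≤ (r * a₁) * (n * d * d₁) :=
            mul_le_mul_of_nonneg_left hy hxpos.le
          rw [hxe] at h2 h4 h3
          linarith only [h2, h3, h4, hnd1]
        · have hyM : n * d * d₁ ≤ r₁ * a := by linarith only [hsum, hxM]
          have hye : r₁ * a = n * d * d₁ := le_antisymm hy hyM
          have h2 : (r₁ * a * d + 2) * (n * d₁) ≤ (r * a * d₁) * (n * d₁) :=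
            mul_le_mul_of_nonneg_right hyd hnd1.le
          have h4 : (r * a₁) * (r₁ * a) ≤ (n * d * d₁) * (r₁ * a) :=
            mul_le_mul_of_nonneg_right hx hypos.le
          rw [hye] at h2 h4 h3
          linarith only [h2, h3, h4, hnd1]
    · -- r₁ < 0, a₁ < 0 : pairing condition fails
      have hA : r * a₁ ≤ -2 := by
        linarith only [hr, mul_le_mul_of_nonneg_left (show a₁ ≤ -1 by linarith only [ha1])
          (show (0:ℤ) ≤ r by linarith only [hr])]
      have hB : r₁ * a ≤ -2 := by
        linarith only [ha, mul_le_mul_of_nonneg_right (show r₁ ≤ -1 by linarith only [hr1])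
          (show (0:ℤ) ≤ a by linarith only [ha])]
      linarith only [hpair, hs, hA, hB, hndd1]
  · -- case v₁² = -2 : r₁a₁ = n d₁² + 1
    have hP : r₁ * a₁ = n * d₁ ^ 2 + 1 := by linarith only [hs]
    have hPpos : 0 < r₁ * a₁ := by
      have h := mul_pos hn (pow_pos hd1 2); linarith only [h, hP]
    rcases mul_pos_iff.mp hPpos with ⟨hr1, ha1⟩ | ⟨hr1, ha1⟩
    · -- r₁ > 0, a₁ > 0
      have hxpos : 0 < r * a₁ := mul_pos (by linarith only [hr]) ha1
      have hypos : 0 < r₁ * a := mul_pos hr1 (by linarith only [ha])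
      have hsum : 2 * (n * d * d₁) + 1 ≤ r * a₁ + r₁ * a := by
        linarith only [hpair, hs]
      rcases mul_pos_iff.mp hprod with ⟨he1, he2⟩ | ⟨he1, he2⟩
      · -- both slope differences positive : the main case
        have he1' : a * d₁ + 1 ≤ a₁ * d := by linarith only [he1]
        have he2' : r * d₁ + 1 ≤ r₁ * d := by linarith only [he2]
        -- Step B : r*a₁*d₁ ≥ n*d*d₁² - d + d₁ + r₁
        have h1 : 2 * (n * d * d₁) + 1 - r * a₁ ≤ r₁ * a := by linarith only [hsum]
        have h2 : d₁ * (2 * (n * d * d₁) + 1 - r * a₁) ≤ d₁ * (r₁ * a) :=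
          mul_le_mul_of_nonneg_left h1 hd1.le
        have h3 : r₁ * (a * d₁ + 1) ≤ r₁ * (a₁ * d) :=
          mul_le_mul_of_nonneg_left he1' hr1.le
        have h4 : r₁ * (a₁ * d) = (n * d₁ ^ 2 + 1) * d := by linear_combination d * hP
        have hB : n * d * d₁ ^ 2 - d + d₁ + r₁ ≤ r * a₁ * d₁ := by
          linarith only [h2, h3, h4]
        -- Step 2 : n*d₁ ≤ 2r - 1
        have h5 : 0 ≤ n * d * d₁ ^ 2 - d + d₁ := by
          have hx1 : (1:ℤ) ≤ n * d₁ ^ 2 := mul_pos hn (pow_pos hd1 2)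
          linarith only [mul_le_mul_of_nonneg_left hx1 hd.le, hd1]
        have h6 : (r * d₁ + 1) * (n * d * d₁ ^ 2 - d + d₁) ≤
            (r₁ * d) * (n * d * d₁ ^ 2 - d + d₁) :=
          mul_le_mul_of_nonneg_right he2' h5
        have h7 : r₁ * (r * a₁ * d₁) = r * d₁ * (n * d₁ ^ 2 + 1) := by
          linear_combination (r * d₁) * hP
        have h8 : r₁ * (n * d * d₁ ^ 2 - d + d₁ + r₁) ≤ r * d₁ * (n * d₁ ^ 2 + 1) := by
          linarith only [mul_le_mul_of_nonneg_left hB hr1.le, h7]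
        have h9 : d * (r₁ * (n * d * d₁ ^ 2 - d + d₁ + r₁)) ≤
            d * (r * d₁ * (n * d₁ ^ 2 + 1)) :=
          mul_le_mul_of_nonneg_left h8 hd.le
        have h10 : d * 1 ≤ d * (r₁ * r₁) :=
          mul_le_mul_of_nonneg_left (by linarith only [mul_pos hr1 hr1]) hd.le
        have h11 : r * d₁ ^ 2 + d₁ ≤ d * (2 * r * d₁ - n * d₁ ^ 2) := by
          linarith only [h9, h6, h10]
        have hZ3 : (3:ℤ) ≤ r * d₁ ^ 2 + d₁ := by
          have hone : (1:ℤ) ≤ d₁ ^ 2 := by linarith only [mul_pos hd1 hd1]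
          linarith only [hd1, hr, mul_le_mul_of_nonneg_left hone
            (show (0:ℤ) ≤ r by linarith only [hr])]
        have h12 : 1 ≤ 2 * r * d₁ - n * d₁ ^ 2 := by
          by_contra hcon
          push_neg at hcon
          have h := mul_nonpos_of_nonneg_of_nonpos hd.le
            (show 2 * r * d₁ - n * d₁ ^ 2 ≤ 0 by linarith only [hcon])
          linarith only [h, h11, hZ3]
        have h13 : n * d₁ ≤ 2 * r - 1 := by
          by_contra hcon
          push_neg at hcon
          have h := mul_le_mul_of_nonneg_right
            (show 2 * r ≤ n * d₁ by linarith only [hcon]) hd1.le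
          linarith only [h, h12]
        -- Step 3 : d₁ ≤ F and n*(F+1-d₁) ≥ 2
        have hd1F : d₁ ≤ F := by
          by_contra hcon
          push_neg at hcon
          have h := mul_le_mul_of_nonneg_left
            (show F + 1 ≤ d₁ by linarith only [hcon]) hn.le
          linarith only [h, hF2, h13]
        have hne2 : 2 ≤ n * (F + 1 - d₁) := by
          have hexp : n * (F + 1 - d₁) = n * F + n - n * d₁ := by ring
          linarith only [h13, hF2, hexp]
        -- split on whether n*d₁² = 1 (i.e. n = 1, d₁ = 1)
        rcases eq_or_lt_of_le (show (1:ℤ) ≤ n * d₁ ^ 2 from mul_pos hn (pow_pos hd1 2))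
          with hcrit | hge2
        · -- n = 1 and d₁ = 1
          have hn_1 : n = 1 := by
            have h := Int.le_of_dvd one_pos ⟨d₁ ^ 2, hcrit⟩
            omega
          subst hn_1
          have hdd : d₁ * d₁ = 1 := by linarith only [hcrit]
          have hd11 : d₁ = 1 := by
            have h := Int.le_of_dvd one_pos ⟨d₁, hdd.symm⟩
            omega
          subst hd11
          have hFr : F = 2 * r := by omega
          have hdlarge : r * (2 * r) + r ≤ d := by rw [hFr] at hdF; exact hdF
          have hP2 : r₁ * a₁ = 2 := by linarith only [hP]
          have hr12 : r₁ ≤ 2 := by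
            by_contra hcon
            push_neg at hcon
            have h := mul_le_mul (show (3:ℤ) ≤ r₁ by linarith only [hcon])
              (show (1:ℤ) ≤ a₁ by linarith only [ha1]) (by norm_num)
              (by linarith only [hcon])
            linarith only [h, hP2]
          have hr1' : r₁ = 1 ∨ r₁ = 2 := by omega
          have hextra : 2 * a + r ≤ 2 * d := hn1 rfl
          rcases hr1' with h | h <;> subst h
          · -- r₁ = 1, a₁ = 2
            have ha12 : a₁ = 2 := by linarith only [hP2]
            subst ha12
            have h2d : 2 * d ≤ 3 * r - 2 := by linarith only [hsum, hextra]
            have hmf : r * 2 ≤ r * (2 * r) :=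
              mul_le_mul_of_nonneg_left (by linarith only [hr])
                (by linarith only [hr])
            linarith only [h2d, hdlarge, hmf, hr]
          · -- r₁ = 2, a₁ = 1
            have ha11 : a₁ = 1 := by linarith only [hP2]
            subst ha11
            linarith only [hsum, hextra]
        · -- n*d₁² ≥ 2
          have key : 2 * d₁ ≤ (F + 1 - d₁) * (n * d₁ ^ 2 - 1) := by
            rcases eq_or_lt_of_le (show (1:ℤ) ≤ d₁ by linarith only [hd1])
              with hd1e | hd1ge2
            · -- d₁ = 1 : need 2 ≤ F * (n - 1)
              rw [← hd1e] at hge2 hd1F ⊢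
              have hn2 : 2 ≤ n := by
                have : n * 1 ^ 2 = n := by ring
                linarith only [hge2, this]
              rcases eq_or_lt_of_le hn2 with hn2e | hn3
              · -- n = 2 : F = r
                rw [← hn2e] at hF1 hF2
                have hFr : F = r := by omega
                rw [hFr, ← hn2e]
                linarith only [hr]
              · -- n ≥ 3 : F ≥ 1
                have h := mul_le_mul_of_nonneg_right (show (1:ℤ) ≤ F from hd1F)
                  (show (0:ℤ) ≤ n - 1 by linarith only [hn3])
                linarith only [h, hn3]
            · -- d₁ ≥ 2
              have e2 : n * d₁ + 1 ≤ n * d₁ ^ 2 := by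
                have h := mul_le_mul_of_nonneg_left
                  (show (1:ℤ) ≤ d₁ - 1 by linarith only [hd1ge2])
                  (show (0:ℤ) ≤ n * d₁ by linarith only [hnd1])
                linarith only [h, hnd1]
              have e1 : 2 * (n * d₁ ^ 2 - 1) ≤ (n * (F + 1 - d₁)) * (n * d₁ ^ 2 - 1) :=
                mul_le_mul_of_nonneg_right hne2 (by linarith only [hge2])
              have hmid : n * (2 * d₁) ≤ n * ((F + 1 - d₁) * (n * d₁ ^ 2 - 1)) := by
                linarith only [e1, e2]
              exact le_of_mul_le_mul_left hmid hn
          -- final contradiction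
          have hfin1 : (r * (F + 1)) * (n * d₁ ^ 2 - 1) ≤ d * (n * d₁ ^ 2 - 1) :=
            mul_le_mul_of_nonneg_right (by linarith only [hdF])
              (by linarith only [hge2])
          have hfin2 : d₁ * (n * d₁ ^ 2 + 1) ≤ (F + 1) * (n * d₁ ^ 2 - 1) := by
            linarith only [key]
          have hfin2' : r * (d₁ * (n * d₁ ^ 2 + 1)) ≤ r * ((F + 1) * (n * d₁ ^ 2 - 1)) :=
            mul_le_mul_of_nonneg_left hfin2 (by linarith only [hr])
          have h7' : r * d₁ * (r₁ * a₁) = r * d₁ * (n * d₁ ^ 2 + 1) := by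
            linear_combination (r * d₁) * hP
          have hmul : (r * d₁ * a₁) * 1 ≤ (r * d₁ * a₁) * r₁ :=
            mul_le_mul_of_nonneg_left (by linarith only [hr1])
              (mul_nonneg (mul_nonneg (by linarith only [hr] : (0:ℤ) ≤ r) hd1.le) ha1.le)
          linarith only [hB, hfin1, hfin2', h7', hmul, hd1, hr1]
      · -- both slope differences negative
        have hxd : r * a₁ * d + 2 ≤ r * a * d₁ := by
          linarith only [hr, mul_le_mul_of_nonneg_left
            (show (1:ℤ) ≤ a * d₁ - a₁ * d by linarith only [he1])
            (show (0:ℤ) ≤ r by linarith only [hr])]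
        have hyd : r₁ * a * d + 2 ≤ r * a * d₁ := by
          linarith only [ha, mul_le_mul_of_nonneg_left
            (show (1:ℤ) ≤ r * d₁ - r₁ * d by linarith only [he2])
            (show (0:ℤ) ≤ a by linarith only [ha])]
        have hrad1 : r * a * d₁ ≤ (n * d ^ 2 + 1) * d₁ :=
          mul_le_mul_of_nonneg_right hra hd1.le
        have hx : r * a₁ ≤ n * d * d₁ := by
          have hxd' : (r * a₁) * d < (n * d * d₁ + 1) * d := by
            linarith only [hxd, hrad1, hd1d]
          have h := lt_of_mul_lt_mul_right hxd' hd.le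
          linarith only [h]
        have hy : r₁ * a ≤ n * d * d₁ := by
          have hyd' : (r₁ * a) * d < (n * d * d₁ + 1) * d := by
            linarith only [hyd, hrad1, hd1d]
          have h := lt_of_mul_lt_mul_right hyd' hd.le
          linarith only [h]
        linarith only [hsum, hx, hy]
    · -- r₁ < 0, a₁ < 0 : pairing condition fails
      have hA : r * a₁ ≤ -2 := by
        linarith only [hr, mul_le_mul_of_nonneg_left (show a₁ ≤ -1 by linarith only [ha1])
          (show (0:ℤ) ≤ r by linarith only [hr])]
      have hB : r₁ * a ≤ -2 := by
        linarith only [ha, mul_le_mul_of_nonneg_right (show r₁ ≤ -1 by linarith only [hr1])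
          (show (0:ℤ) ≤ a by linarith only [ha])]
      linarith only [hpair, hs, hA, hB, hndd1]
end

section
/- Let n be a positive integer, r ≥ 2 and d > 0 integers. Set a₀ = ⌊(nd² + 1)/r⌋ and f = (nd² + 1) − r·a₀ (so 0 ≤ f < r is the remainder of nd² + 1 modulo r), and let v₀ = (r, d, a₀). For any v₁ = (r₁, d₁, a₁) ∈ D_{v₀}^{BN}, setting m = r₁d − rd₁ and k = a₁d − a₀d₁, one has: (i) rr₁k = −nmdd₁ + rd − r₁d₁ + r₁d₁f; (ii) 1 ≤ ndd₁m ≤ rd − r₁d₁ + r₁d₁f − rr₁; and (iii) 1 ≤ d₁nm < r + r₁(r − 2). -/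
/-- with `a₀ = ⌊(nd² + 1)/r⌋`, `f` the remainder of `nd² + 1`
modulo `r`, `v₀ = (r, d, a₀)`, and `v₁ = (r₁, d₁, a₁) ∈ D_{v₀}^{BN}`,
setting `m = r₁d − rd₁` and `k = a₁d − a₀d₁`:
(i) `rr₁k = −nmdd₁ + rd − r₁d₁ + r₁d₁f`;
(ii) `1 ≤ ndd₁m ≤ rd − r₁d₁ + r₁d₁f − rr₁`;
(iii) `1 ≤ d₁nm < r + r₁(r − 2)`. -/
theorem DBN_numerical_constraints (n r d a₀ f r₁ d₁ a₁ : ℤ) (hn : 0 < n)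
    (hr : 2 ≤ r) (hd : 0 < d)
    (ha₀ : a₀ = (n * d ^ 2 + 1) / r) (hf : f = (n * d ^ 2 + 1) - r * a₀)
    (h : memDBN n r d a₀ r₁ d₁ a₁) :
    r * r₁ * (a₁ * d - a₀ * d₁) =
        -(n * (r₁ * d - r * d₁) * d * d₁) + r * d - r₁ * d₁ + r₁ * d₁ * f ∧
    (1 ≤ n * d * d₁ * (r₁ * d - r * d₁) ∧
      n * d * d₁ * (r₁ * d - r * d₁) ≤ r * d - r₁ * d₁ + r₁ * d₁ * f - r * r₁) ∧
    (1 ≤ d₁ * n * (r₁ * d - r * d₁) ∧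
      d₁ * n * (r₁ * d - r * d₁) < r + r₁ * (r - 2)) := by
  obtain ⟨⟨hsq, hd₁, hdle, hpair, hposD⟩, hm, hkm⟩ := h
  simp only [mukaiSq, mukaiPair] at hsq hpair
  -- basic facts
  have hr₁ : 0 < r₁ := by nlinarith
  have hm1 : 1 ≤ d * r₁ - d₁ * r := hm
  -- f is the remainder of n*d^2+1 mod r
  have hfmod : f = (n * d ^ 2 + 1) % r := by
    rw [Int.emod_def, ← ha₀]; exact hf
  have hf0 : 0 ≤ f := by rw [hfmod]; exact Int.emod_nonneg _ (by omega)
  have hfr : f < r := by rw [hfmod]; exact Int.emod_lt_of_pos _ (by omega)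
  have hra : r * a₀ = n * d ^ 2 + 1 - f := by linarith
  -- v₁² = -2, i.e. r₁ * a₁ = n * d₁² + 1
  have e1 : r₁ * a₁ = n * d₁ ^ 2 + 1 := by
    rcases hsq with h0 | h2
    · exfalso
      have e0 : r₁ * a₁ = n * d₁ ^ 2 := by linarith
      have hp1 : 2 * n * d * d₁ - r * a₁ - r₁ * a₀ ≤ 1 := by linarith
      -- from k ≥ m : d₁ * (n*d*d₁ - r₁*a₀) ≥ r₁ * (d*r₁ - d₁*r) ≥ r₁ ≥ 1
      have hX : 1 ≤ n * d * d₁ - r₁ * a₀ := by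
        have h1 : r₁ * (d * r₁ - d₁ * r) ≤ r₁ * (d * a₁ - d₁ * a₀) :=
          mul_le_mul_of_nonneg_left hkm hr₁.le
        have h2 : r₁ * (d * a₁ - d₁ * a₀) = d₁ * (n * d * d₁ - r₁ * a₀) := by
          linear_combination d * e0
        nlinarith [mul_le_mul_of_nonneg_left hm1 hr₁.le]
      -- multiply pairing by r₁
      have hp2 : r₁ * (2 * n * d * d₁ - r * a₁ - r₁ * a₀) ≤ r₁ * 1 :=
        mul_le_mul_of_nonneg_left hp1 hr₁.le
      have hp3 : r₁ * (2 * n * d * d₁ - r * a₁ - r₁ * a₀) =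
          n * d₁ * (d * r₁ - d₁ * r) + r₁ * (n * d * d₁ - r₁ * a₀) := by
        linear_combination (-r) * e0
      nlinarith [mul_le_mul_of_nonneg_left hm1 (mul_pos hn hd₁).le,
        mul_le_mul_of_nonneg_left hX hr₁.le]
    · linarith
  -- (i)
  have hi : r * r₁ * (a₁ * d - a₀ * d₁) =
      -(n * (r₁ * d - r * d₁) * d * d₁) + r * d - r₁ * d₁ + r₁ * d₁ * f := by
    linear_combination d * r * e1 - d₁ * r₁ * hra
  refine ⟨hi, ⟨?_, ?_⟩, ?_, ?_⟩
  · nlinarith [mul_le_mul_of_nonneg_left hm1 (mul_pos (mul_pos hn hd) hd₁).le,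
      mul_pos (mul_pos hn hd) hd₁]
  · -- upper bound in (ii): use k ≥ m ≥ 1 so r*r₁*k ≥ r*r₁
    have hk1 : 1 ≤ a₁ * d - a₀ * d₁ := by linarith
    nlinarith [mul_le_mul_of_nonneg_left hk1 (mul_pos (by linarith : (0:ℤ) < r) hr₁).le]
  · nlinarith [mul_le_mul_of_nonneg_left hm1 (mul_pos hn hd₁).le, mul_pos hn hd₁]
  · -- upper bound in (iii)
    have hk1 : 1 ≤ a₁ * d - a₀ * d₁ := by linarith
    have key : d * (d₁ * n * (r₁ * d - r * d₁)) < d * (r + r₁ * (r - 2)) := by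
      nlinarith [mul_le_mul_of_nonneg_left hk1 (mul_pos (by linarith : (0:ℤ) < r) hr₁).le,
        mul_nonneg (mul_nonneg hr₁.le hd₁.le) (by linarith : (0:ℤ) ≤ r - 1 - f),
        mul_nonneg (mul_nonneg hr₁.le (by linarith : (0:ℤ) ≤ d - d₁)) (by linarith : (0:ℤ) ≤ r - 2)]
    exact lt_of_mul_lt_mul_left key hd.le
end

section
/- Let n be a positive integer and let v = (r, d, a) be an integer triple with r ≥ 0, a ≥ 0, d > 0, v² = 2nd² − 2ra ≥ −2, and n ≥ r. Suppose v₁ = (r₁, d₁, a₁) ∈ D_v and set m = r₁d − rd₁, k = a₁d − ad₁. Then d₁ = 1 and one of the following holds: (1) r₁d = r + 1, r₁a₁ = n + 1, and kr₁² ≤ 2r − n; (2) n = r, v = (r, r + 2, r² + 3r + 1), and v₁ = (1, 1, r + 1); (3) n = r = 1, v = (1, d, 2d − 1) with d ≥ 2, and v₁ = (1, 1, 2). -/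
set_option maxHeartbeats 1000000 in
/-- classification of elements of `D_v` when `n ≥ r`. -/
theorem mem_D_classification_n_ge_r (n r d a r₁ d₁ a₁ : ℤ) (hn : 0 < n)
    (hr : 0 ≤ r) (ha : 0 ≤ a) (hd : 0 < d) (hv : -2 ≤ mukaiSq n r d a)
    (hnr : r ≤ n) (h : memD n r d a r₁ d₁ a₁) :
    d₁ = 1 ∧
      ((r₁ * d = r + 1 ∧ r₁ * a₁ = n + 1 ∧
          (a₁ * d - a * d₁) * r₁ ^ 2 ≤ 2 * r - n) ∨
        (n = r ∧ d = r + 2 ∧ a = r ^ 2 + 3 * r + 1 ∧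
          r₁ = 1 ∧ d₁ = 1 ∧ a₁ = r + 1) ∨
        (n = 1 ∧ r = 1 ∧ a = 2 * d - 1 ∧ 2 ≤ d ∧
          r₁ = 1 ∧ d₁ = 1 ∧ a₁ = 2)) := by
  obtain ⟨hsq1, hd1pos, hd1led, hpair, hprod⟩ := h
  simp only [mukaiSq] at hsq1 hv
  simp only [mukaiPair, mukaiSq] at hpair
  -- basic bounds on r₁ * a₁
  have hA : n * d₁ ^ 2 ≤ r₁ * a₁ := by rcases hsq1 with h1 | h1 <;> linarith
  have hB : r₁ * a₁ ≤ n * d₁ ^ 2 + 1 := by rcases hsq1 with h1 | h1 <;> linarith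
  have hP1 : 2 * n * d * d₁ - r * a₁ - r₁ * a ≤ 1 := by
    have := Int.lt_iff_add_one_le.mp hpair
    rcases hsq1 with h1 | h1 <;> linarith
  have hnd1sq : 1 ≤ n * d₁ ^ 2 := by nlinarith
  have hr1a1 : 1 ≤ r₁ * a₁ := le_trans hnd1sq hA
  -- Step 1 : r₁ ≥ 1 and a₁ ≥ 1
  have hr1pos : 1 ≤ r₁ ∧ 1 ≤ a₁ := by
    rcases lt_trichotomy r₁ 0 with h1 | h1 | h1
    · -- r₁ < 0 forces a₁ < 0, contradiction with the pairing bound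
      have ha1neg : a₁ < 0 := by nlinarith
      exfalso
      have t1 : 0 ≤ r * (-a₁) := mul_nonneg hr (by linarith)
      have t2 : 0 ≤ (-r₁) * a := mul_nonneg (by linarith) ha
      have hdd1 : 1 ≤ d * d₁ := mul_pos hd hd1pos
      have t3 : 1 ≤ n * (d * d₁) := by nlinarith
      nlinarith
    · exfalso; rw [h1] at hr1a1; simp at hr1a1
    · constructor
      · linarith [Int.lt_iff_add_one_le.mp h1]
      · by_contra h'
        push_neg at h'
        have ha0 : a₁ ≤ 0 := by linarith [Int.lt_iff_add_one_le.mp h']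
        have := mul_nonpos_of_nonneg_of_nonpos (le_of_lt h1) ha0
        linarith
  obtain ⟨hr1, ha1⟩ := hr1pos
  -- Step 2 : m := r₁d - rd₁ ≥ 1 and k := a₁d - ad₁ ≥ 1
  have hnotneg : ¬(r₁ * d - r * d₁ ≤ -1 ∧ a₁ * d - a * d₁ ≤ -1) := by
    rintro ⟨hm, hk⟩
    -- r ≥ 2
    have hrd1 : r₁ * d + 1 ≤ r * d₁ := by linarith
    have hr2 : 2 ≤ r := by nlinarith
    -- a ≥ d² + 1
    have t2 : a₁ * d + 1 ≤ a * d₁ := by linarith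
    have t3 : (a₁ * d + 1) * r₁ ≤ a * d₁ * r₁ :=
      mul_le_mul_of_nonneg_right t2 (by linarith)
    have t4 : n * d₁ ^ 2 * d ≤ r₁ * a₁ * d :=
      mul_le_mul_of_nonneg_right hA (by linarith)
    have t5 : r * d₁ ≤ n * d₁ := mul_le_mul_of_nonneg_right hnr (by linarith)
    have t7 : (r₁ * d + 1) * (d₁ * d) ≤ n * d₁ * (d₁ * d) := by
      apply mul_le_mul_of_nonneg_right _ (by positivity)
      linarith
    have tbig : r₁ * d ^ 2 * d₁ + d * d₁ + r₁ ≤ a * d₁ * r₁ := by nlinarith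
    have habig : d ^ 2 + 1 ≤ a := by
      by_contra hcon
      push_neg at hcon
      have : a * (d₁ * r₁) ≤ d ^ 2 * (d₁ * r₁) := by
        apply mul_le_mul_of_nonneg_right (by linarith) (by positivity)
      nlinarith
    -- final contradiction
    have hid : d * (2 * n * d * d₁ - r * a₁ - r₁ * a)
        = d₁ * (2 * n * d ^ 2 - 2 * r * a) - r * (a₁ * d - a * d₁)
          - a * (r₁ * d - r * d₁) := by ring
    have t9 : d * (2 * n * d * d₁ - r * a₁ - r₁ * a) ≤ d * 1 :=
      mul_le_mul_of_nonneg_left hP1 (by linarith)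
    have t10 : d₁ * (-2) ≤ d₁ * (2 * n * d ^ 2 - 2 * r * a) :=
      mul_le_mul_of_nonneg_left hv (by linarith)
    have t11 : r * 1 ≤ r * (-(a₁ * d - a * d₁)) :=
      mul_le_mul_of_nonneg_left (by linarith) hr
    have t12 : a * 1 ≤ a * (-(r₁ * d - r * d₁)) :=
      mul_le_mul_of_nonneg_left (by linarith) ha
    nlinarith [sq_nonneg (2 * d - 3)]
  have hmk : 1 ≤ r₁ * d - r * d₁ ∧ 1 ≤ a₁ * d - a * d₁ := by
    rcases lt_trichotomy (r₁ * d - r * d₁) 0 with h1 | h1 | h1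
    · exfalso
      have hkneg : a₁ * d - a * d₁ < 0 := by
        by_contra h'
        push_neg at h'
        have := mul_nonpos_of_nonneg_of_nonpos h' h1.le
        linarith
      exact hnotneg ⟨by linarith [Int.lt_iff_add_one_le.mp h1],
        by linarith [Int.lt_iff_add_one_le.mp hkneg]⟩
    · exfalso; rw [h1] at hprod; simp at hprod
    · constructor
      · linarith [Int.lt_iff_add_one_le.mp h1]
      · by_contra h'
        push_neg at h'
        have hk0 : a₁ * d - a * d₁ ≤ 0 := by linarith [Int.lt_iff_add_one_le.mp h']
        have := mul_nonpos_of_nonpos_of_nonneg hk0 h1.le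
        linarith
  obtain ⟨hm1, hk1⟩ := hmk
  -- Step 3: the (-2)-class case must hold
  have hId2 : d₁ * (2 * n * d * d₁ - r * a₁ - r₁ * a)
      = a₁ * (r₁ * d - r * d₁) + r₁ * (a₁ * d - a * d₁)
        + (2 * n * d₁ ^ 2 - 2 * r₁ * a₁) * d := by ring
  rcases hsq1 with hε0 | hε1
  · exfalso
    -- v₁² = 0 is impossible
    have hq0 : r₁ * a₁ = n * d₁ ^ 2 := by linarith
    have hP : 2 * n * d * d₁ - r * a₁ - r₁ * a ≤ 1 := hP1
    have t1 : d₁ * (2 * n * d * d₁ - r * a₁ - r₁ * a) ≤ d₁ * 1 :=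
      mul_le_mul_of_nonneg_left hP (by linarith)
    have t2 : a₁ * 1 ≤ a₁ * (r₁ * d - r * d₁) :=
      mul_le_mul_of_nonneg_left hm1 (by linarith)
    have t3 : r₁ * 1 ≤ r₁ * (a₁ * d - a * d₁) :=
      mul_le_mul_of_nonneg_left hk1 (by linarith)
    have hsum : a₁ + r₁ ≤ d₁ := by
      have := hId2
      rw [hε0] at this
      nlinarith
    nlinarith [sq_nonneg (a₁ - r₁), mul_le_mul hsum hsum (by linarith) (by linarith)]
  -- now r₁a₁ = nd₁² + 1
  have hq : r₁ * a₁ = n * d₁ ^ 2 + 1 := by linarith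
  have hPneg : 2 * n * d * d₁ - r * a₁ - r₁ * a ≤ -1 := by
    have := Int.lt_iff_add_one_le.mp hpair
    linarith
  have hc3 : a₁ * (r₁ * d - r * d₁) + r₁ * (a₁ * d - a * d₁) ≤ 2 * d - d₁ := by
    have t1 : d₁ * (2 * n * d * d₁ - r * a₁ - r₁ * a) ≤ d₁ * (-1) :=
      mul_le_mul_of_nonneg_left hPneg (by linarith)
    have t2 : (2 * n * d₁ ^ 2 - 2 * r₁ * a₁) * d = -2 * d := by rw [hε1]
    linarith [hId2]
  have hr1k : r₁ * 1 ≤ r₁ * (a₁ * d - a * d₁) :=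
    mul_le_mul_of_nonneg_left hk1 (by linarith)
  have ha1m : a₁ * 1 ≤ a₁ * (r₁ * d - r * d₁) :=
    mul_le_mul_of_nonneg_left hm1 (by linarith)
  -- Step 4 : d₁ = 1
  have hd1eq : d₁ = 1 := by
    by_contra hne
    have hd12 : 2 ≤ d₁ := by omega
    have t5 : r * d₁ ≤ n * d₁ := mul_le_mul_of_nonneg_right hnr (by linarith)
    have hM : r₁ * d - n * d₁ ≤ r₁ * d - r * d₁ := by linarith
    have ts1 : a₁ * (r₁ * d - n * d₁) ≤ a₁ * (r₁ * d - r * d₁) :=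
      mul_le_mul_of_nonneg_left hM (by linarith)
    have hkey : a₁ * (r₁ * d - n * d₁) = (n * d₁ ^ 2 + 1) * d - n * d₁ * a₁ := by
      linear_combination d * hq
    have h7 : n * d₁ ^ 2 * d - d + d₁ + r₁ ≤ n * d₁ * a₁ := by nlinarith
    have ha1le : a₁ ≤ 2 * d - d₁ - r₁ := by nlinarith
    have hc8 : n * d₁ ^ 2 * d - d + d₁ + r₁ ≤ 2 * n * d₁ * d - n * d₁ ^ 2 - n * d₁ * r₁ := by
      have := mul_le_mul_of_nonneg_left ha1le (show (0:ℤ) ≤ n * d₁ by positivity)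
      nlinarith
    have hcase : d₁ = 2 ∨ 3 ≤ d₁ := by omega
    rcases hcase with h2 | h3
    · subst h2
      have hdlb : 4 * n + 2 * n * r₁ + 2 + r₁ ≤ d := by linarith
      have h7' : 4 * n * d - d + 2 + r₁ ≤ 2 * n * a₁ := by linarith
      have h9 : (4 * n * d - d + 2 + r₁) * r₁ ≤ (2 * n * a₁) * r₁ :=
        mul_le_mul_of_nonneg_right h7' (by linarith)
      have h10 : (2 * n * a₁) * r₁ = 2 * n * (4 * n + 1) := by
        linear_combination 2 * n * hq
      have hXpos : 0 ≤ 4 * n * d - d + 2 + r₁ := by nlinarith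
      have hXX : (4 * n * d - d + 2 + r₁) * 1 ≤ (4 * n * d - d + 2 + r₁) * r₁ :=
        mul_le_mul_of_nonneg_left hr1 hXpos
      nlinarith [mul_nonneg (show (0:ℤ) ≤ 4 * n - 1 by linarith)
        (show (0:ℤ) ≤ d - (4 * n + 2 * n * r₁ + 2 + r₁) by linarith),
        mul_pos hn (show (0:ℤ) < r₁ by linarith), mul_pos hn hn]
    · -- d₁ ≥ 3
      have hnd1 : 3 ≤ n * d₁ := by nlinarith
      have e2 : d ≤ n * d₁ * d * (d₁ - 2) := by
        nlinarith [mul_nonneg (mul_nonneg (mul_nonneg hn.le hd1pos.le) hd.le)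
          (show (0:ℤ) ≤ d₁ - 3 by linarith)]
      nlinarith [mul_nonneg (mul_nonneg hn.le hd1pos.le) hd1pos.le,
        mul_nonneg (mul_nonneg hn.le hd1pos.le) (show (0:ℤ) ≤ r₁ by linarith)]
  subst hd1eq
  refine ⟨rfl, ?_⟩
  have hq' : r₁ * a₁ = n + 1 := by linarith [hq]
  rcases lt_or_eq_of_le hm1 with hm2 | hmeq
  · -- m ≥ 2 : special cases
    right
    have hm2le : 1 + 1 ≤ r₁ * d - r * 1 := Int.lt_iff_add_one_le.mp hm2
    have hr1eq : r₁ = 1 := by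
      by_contra h'
      have hr12 : 2 ≤ r₁ := by omega
      have ha1n : 2 * a₁ ≤ n + 1 := by
        have := mul_nonneg (show (0:ℤ) ≤ r₁ - 2 by linarith)
          (show (0:ℤ) ≤ a₁ by linarith)
        linarith [hq']
      have hMd : r₁ * d - n ≤ r₁ * d - r * 1 := by linarith
      have ts1 : a₁ * (r₁ * d - n) ≤ a₁ * (r₁ * d - r * 1) :=
        mul_le_mul_of_nonneg_left hMd (by linarith)
      have hkey : a₁ * (r₁ * d - n) = (n + 1) * d - n * a₁ := by
        linear_combination d * hq'
      have hc7 : (n - 1) * d + 1 + r₁ ≤ n * a₁ := by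
        linarith [ts1, hkey, hc3, hr1k]
      have ha1m2 : a₁ * 2 ≤ a₁ * (r₁ * d - r * 1) :=
        mul_le_mul_of_nonneg_left hm2le (by linarith)
      have hr1k2 : 2 * 1 ≤ r₁ * (a₁ * d - a * 1) :=
        mul_le_mul hr12 hk1 (by linarith) (by linarith)
      have ha1d : a₁ ≤ d - 2 := by linarith [hc3]
      have hna1 : n * a₁ ≤ n * (d - 2) :=
        mul_le_mul_of_nonneg_left ha1d (by linarith)
      have hdge : 2 * n + 1 + r₁ ≤ d := by linarith [hc7, hna1]
      have haux1 : 0 ≤ (n - 1) * (d - (2 * n + 1 + r₁)) :=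
        mul_nonneg (by linarith) (by linarith)
      have haux2 : n * (2 * a₁) ≤ n * (n + 1) :=
        mul_le_mul_of_nonneg_left ha1n (by linarith)
      have haux3 : n * 1 ≤ n * r₁ :=
        mul_le_mul_of_nonneg_left (by linarith) (by linarith)
      nlinarith [haux1, haux2, haux3, hc7, mul_pos hn hn]
    subst hr1eq
    have ha1eq : a₁ = n + 1 := by linarith
    subst ha1eq
    have hm2' : 2 ≤ d - r := by linarith
    have hk1' : 1 ≤ (n + 1) * d - a := by linarith
    have hc3' : (n + 1) * (d - r) + ((n + 1) * d - a) ≤ 2 * d - 1 := by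
      linarith [hc3]
    have hcase : n = 1 ∨ 2 ≤ n := by omega
    rcases hcase with h1 | h2
    · -- case (3)
      right
      subst h1
      have hr1' : 1 ≤ r := by linarith [hc3', hk1']
      have hre : r = 1 := by omega
      subst hre
      have hkle : 2 * d - a ≤ 1 := by linarith [hc3']
      refine ⟨rfl, rfl, by linarith, by linarith, rfl, rfl, by linarith⟩
    · -- case (2)
      left
      have hauxd : 0 ≤ (n + 1) * (d - r - 2) :=
        mul_nonneg (by linarith) (by linarith)
      have hdge : n + 2 ≤ d := by linarith [hauxd, hc3', hk1']
      have hdle : d ≤ n + 2 := by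
        by_contra hcon
        push_neg at hcon
        have hcon' : n + 3 ≤ d := by omega
        have t1 : (n + 1) * (d - n) ≤ (n + 1) * (d - r) :=
          mul_le_mul_of_nonneg_left (by linarith) (by linarith)
        have t2 : (n - 1) * (n + 3) ≤ (n - 1) * d :=
          mul_le_mul_of_nonneg_left hcon' (by linarith)
        nlinarith [t1, t2, hc3', hk1']
      have hde : d = n + 2 := by omega
      have hmle : d - r ≤ 2 := by
        by_contra hcon
        push_neg at hcon
        have hcon' : 3 ≤ d - r := by omega
        have t3 : (n + 1) * 3 ≤ (n + 1) * (d - r) :=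
          mul_le_mul_of_nonneg_left hcon' (by linarith)
        linarith [hc3', hk1', t3]
      have hre : r = n := by omega
      subst hre
      subst hde
      refine ⟨rfl, rfl, by linarith [hc3', hk1'], rfl, rfl, rfl⟩
  · -- m = 1 : case (1)
    left
    have hdr : r₁ * d = r + 1 := by linarith
    refine ⟨hdr, hq', ?_⟩
    have hc3r : (a₁ * (r₁ * d - r * 1) + r₁ * (a₁ * d - a * 1)) * r₁
        ≤ (2 * d - 1) * r₁ := mul_le_mul_of_nonneg_right hc3 (by linarith)
    have e : (r₁ * a₁) * (r₁ * d) = (n + 1) * (r + 1) := by rw [hq', hdr]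
    have hm1' : r₁ * d - r * 1 = 1 := by linarith
    nlinarith [hc3r, e, hq', hdr, hr1]
end

section
/- Let n be a positive integer and let v = (r, d, 1) be an integer triple with r ≥ 0, d > 0 and v² = 2nd² − 2r ≥ −2. If D_v ≠ ∅, then n = 1, r = 2d − 1 (i.e. v = (r, (r+1)/2, 1)), and D_v = {(2, 1, 1)}. -/
/-- Key lemma: any member of `D_{(r,d,1)}` forces everything. -/
lemma memD_key (n r d : ℤ) (hn : 0 < n) (hr : 0 ≤ r) (hd : 0 < d)
    (r₁ d₁ a₁ : ℤ) (h : memD n r d 1 r₁ d₁ a₁) :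
    n = 1 ∧ r = 2 * d - 1 ∧ r₁ = 2 ∧ d₁ = 1 ∧ a₁ = 1 ∧ 2 ≤ d := by
  obtain ⟨hsq, hd₁, hdd, hpair, hprod⟩ := h
  simp only [mukaiSq, mukaiPair, mul_one, one_mul] at hsq hpair hprod
  have hnd₁ : 1 ≤ n * d₁ ^ 2 := by nlinarith
  have hra : 0 < r₁ * a₁ := by rcases hsq with h0 | h0 <;> nlinarith
  have ha₁ : 0 < a₁ := by
    by_contra hcon
    push_neg at hcon
    rcases lt_or_eq_of_le hcon with h' | h'
    · have hr₁' : r₁ < 0 := by nlinarith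
      rcases hsq with h0 | h0 <;>
        nlinarith [mul_pos (mul_pos hn hd) hd₁,
          mul_nonneg hr (by linarith : (0:ℤ) ≤ -a₁)]
    · subst h'
      simp at hra
  have hr₁ : 0 < r₁ := by nlinarith
  have hA0 : 0 ≤ a₁ * d - d₁ := by
    nlinarith [mul_nonneg (by linarith : (0:ℤ) ≤ a₁ - 1) hd.le]
  have hB : 0 < r₁ * d - r * d₁ := by nlinarith
  have hA : 0 < a₁ * d - d₁ := by nlinarith
  have hA1 : d₁ + 1 ≤ a₁ * d := by linarith
  have hB1 : r * d₁ + 1 ≤ r₁ * d := by linarith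
  rcases hsq with h0 | h0
  · -- v₁² = 0 : impossible
    exfalso
    have hE : r₁ * a₁ = n * d₁ ^ 2 := by linarith
    have hEd : r₁ * a₁ * d = n * d₁ ^ 2 * d := by rw [hE]
    have hEd₁ : r₁ * a₁ * d₁ = n * d₁ ^ 2 * d₁ := by rw [hE]
    have hP : 2 * n * d * d₁ - 1 ≤ r * a₁ + r₁ := by linarith
    have h1 : r * a₁ * d₁ + a₁ ≤ n * d₁ ^ 2 * d := by
      have := mul_le_mul_of_nonneg_left hB1 ha₁.le
      linarith [this, hEd]
    have h2 : 2 * n * d * d₁ ^ 2 - d₁ - n * d₁ ^ 2 * d + a₁ ≤ r₁ * d₁ := by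
      linarith [mul_le_mul_of_nonneg_right hP hd₁.le, h1]
    have h3 : a₁ * (n * d * d₁ ^ 2) - a₁ * d₁ + a₁ ^ 2 ≤ n * d₁ ^ 3 := by
      linarith [mul_le_mul_of_nonneg_left h2 ha₁.le, hEd₁]
    rcases eq_or_lt_of_le (by linarith : (1:ℤ) ≤ a₁) with h4 | h4
    · -- a₁ = 1
      have h4' := h4.symm
      subst h4'
      linarith [h3, mul_nonneg (by positivity : (0:ℤ) ≤ n * d₁ ^ 2)
          (by linarith : (0:ℤ) ≤ d - d₁ - 1),
        mul_nonneg (by linarith : (0:ℤ) ≤ n - 1) (sq_nonneg d₁),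
        mul_nonneg hd₁.le (by linarith : (0:ℤ) ≤ d₁ - 1)]
    · -- a₁ ≥ 2
      linarith [h3, mul_nonneg (mul_nonneg (mul_nonneg ha₁.le hn.le)
          (mul_nonneg hd₁.le hd₁.le)) (sub_nonneg.mpr hdd),
        sq_nonneg (2 * a₁ - d₁),
        mul_nonneg (by linarith : (0:ℤ) ≤ a₁ - 2)
          (by positivity : (0:ℤ) ≤ n * d₁ ^ 3),
        mul_nonneg (by linarith : (0:ℤ) ≤ n - 1)
          (by positivity : (0:ℤ) ≤ d₁ ^ 3),
        mul_nonneg (mul_nonneg hd₁.le hd₁.le) (by linarith : (0:ℤ) ≤ d₁ - 1),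
        mul_pos hd₁ hd₁]
  · -- v₁² = -2
    have hE : r₁ * a₁ = n * d₁ ^ 2 + 1 := by linarith
    have hEd : r₁ * a₁ * d = (n * d₁ ^ 2 + 1) * d := by rw [hE]
    have hEd₁ : r₁ * a₁ * d₁ = (n * d₁ ^ 2 + 1) * d₁ := by rw [hE]
    have hP : 2 * n * d * d₁ + 1 ≤ r * a₁ + r₁ := by linarith
    have h1 : r * a₁ * d₁ + a₁ ≤ (n * d₁ ^ 2 + 1) * d := by
      linarith [mul_le_mul_of_nonneg_left hB1 ha₁.le, hEd]
    have h2 : n * d * d₁ ^ 2 + d₁ - d + a₁ ≤ r₁ * d₁ := by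
      linarith [mul_le_mul_of_nonneg_right hP hd₁.le, h1]
    have h3 : a₁ * (n * d * d₁ ^ 2) + a₁ * d₁ - a₁ * d + a₁ ^ 2
        ≤ (n * d₁ ^ 2 + 1) * d₁ := by
      linarith [mul_le_mul_of_nonneg_left h2 ha₁.le, hEd₁]
    have ha1 : a₁ = 1 := by
      by_contra hcon
      have ha2 : 2 ≤ a₁ := by omega
      linarith [h3, mul_nonneg (mul_nonneg ha₁.le (sub_nonneg.mpr hdd))
          (by linarith : (0:ℤ) ≤ n * d₁ ^ 2 - 1),
        mul_nonneg (by linarith : (0:ℤ) ≤ a₁ - 2)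
          (by positivity : (0:ℤ) ≤ n * d₁ ^ 3),
        mul_nonneg (by linarith : (0:ℤ) ≤ n - 1)
          (by positivity : (0:ℤ) ≤ d₁ ^ 3),
        mul_nonneg (mul_nonneg hd₁.le hd₁.le) (by linarith : (0:ℤ) ≤ d₁ - 1),
        mul_nonneg hd₁.le (by linarith : (0:ℤ) ≤ d₁ - 1),
        sq_nonneg (a₁ - 2)]
    subst ha1
    have hr₁eq : r₁ = n * d₁ ^ 2 + 1 := by linarith
    have hr₁d : r₁ * d = (n * d₁ ^ 2 + 1) * d := by rw [hr₁eq]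
    have hrlow : 2 * n * d * d₁ - n * d₁ ^ 2 ≤ r := by linarith
    have hdgt : d₁ + 1 ≤ d := by linarith
    have h5 : n * d₁ ^ 2 * (d - d₁) ≤ d - 1 := by
      linarith [mul_le_mul_of_nonneg_right hrlow hd₁.le, hB1, hr₁d]
    have h6 : n * d₁ ^ 2 ≤ d₁ := by
      linarith [h5, mul_nonneg (by linarith : (0:ℤ) ≤ n * d₁ ^ 2 - 1)
        (by linarith : (0:ℤ) ≤ d - d₁ - 1)]
    have hd₁1 : d₁ = 1 := by
      have : d₁ ≤ 1 := by
        nlinarith [h6, mul_nonneg (by linarith : (0:ℤ) ≤ n - 1) (sq_nonneg d₁)]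
      omega
    subst hd₁1
    have hn1 : n = 1 := by omega
    subst hn1
    have hr₁2 : r₁ = 2 := by linarith
    refine ⟨rfl, by linarith, hr₁2, rfl, rfl, by linarith⟩

/-- for `v = (r, d, 1)` with `r ≥ 0`, `d > 0`, `v² ≥ −2`:
if `D_v ≠ ∅` then `n = 1`, `r = 2d − 1`, and `D_v = {(2, 1, 1)}`. -/
theorem D_of_a_eq_one (n r d : ℤ) (hn : 0 < n) (hr : 0 ≤ r) (hd : 0 < d)
    (hv : -2 ≤ mukaiSq n r d 1)
    (hne : ∃ r₁ d₁ a₁ : ℤ, memD n r d 1 r₁ d₁ a₁) :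
    n = 1 ∧ r = 2 * d - 1 ∧
      ∀ r₁ d₁ a₁ : ℤ,
        memD n r d 1 r₁ d₁ a₁ ↔ (r₁ = 2 ∧ d₁ = 1 ∧ a₁ = 1) := by
  obtain ⟨r₀, d₀, a₀, hm⟩ := hne
  obtain ⟨hn1, hr1, -, -, -, hd2⟩ := memD_key n r d hn hr hd r₀ d₀ a₀ hm
  refine ⟨hn1, hr1, fun r₁ d₁ a₁ => ⟨fun hm2 => ?_, fun ⟨h1, h2, h3⟩ => ?_⟩⟩
  · obtain ⟨-, -, e1, e2, e3, -⟩ := memD_key n r d hn hr hd r₁ d₁ a₁ hm2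
    exact ⟨e1, e2, e3⟩
  · subst h1 h2 h3 hn1 hr1
    refine ⟨Or.inr (by norm_num [mukaiSq]), one_pos, by linarith, ?_, ?_⟩
    · simp only [mukaiSq, mukaiPair]; ring_nf; norm_num
    · have : (1 * d - 1 * 1) * (2 * d - (2 * d - 1) * 1) = d - 1 := by ring
      rw [this]; linarith
end

section
/- Let n be a positive integer and let v = (r, d, 2) be an integer triple with r ≥ 0, d > 0 and v² = 2nd² − 4r ≥ −2. If v₁ ∈ D_v, then (n, v, v₁) is one of the following: for n = 1: (v, v₁) = ((11, 5, 2), (5, 2, 1)), or ((23, 7, 2), (10, 3, 1)), or ((12, 5, 2), (5, 2, 1)), or v = (r, d, 2) with d ≥ 3 and 2d − 3 ≤ r ≤ 2d − 1 and v₁ = (2, 1, 1); for n = 2: (v, v₁) = ((11, 4, 2), (3, 1, 1)), or ((7, 3, 2), (3, 1, 1)), or ((8, 3, 2), (3, 1, 1)); for n = 3: v = (11, 3, 2) and v₁ = (4, 1, 1). For all other n, D_v = ∅. -/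
set_option maxHeartbeats 1000000 in
/-- classification of `(n, v, v₁)` with `v = (r, d, 2)` and
`v₁ ∈ D_v` (in particular, for `n ≥ 4` one has `D_v = ∅`). -/
theorem D_of_a_eq_two (n r d r₁ d₁ a₁ : ℤ) (hn : 0 < n) (hr : 0 ≤ r)
    (hd : 0 < d) (hv : -2 ≤ mukaiSq n r d 2)
    (h : memD n r d 2 r₁ d₁ a₁) :
    (n = 1 ∧
      ((r = 11 ∧ d = 5 ∧ r₁ = 5 ∧ d₁ = 2 ∧ a₁ = 1) ∨
        (r = 23 ∧ d = 7 ∧ r₁ = 10 ∧ d₁ = 3 ∧ a₁ = 1) ∨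
        (3 ≤ d ∧ 2 * d - 3 ≤ r ∧ r ≤ 2 * d - 1 ∧ r₁ = 2 ∧ d₁ = 1 ∧ a₁ = 1) ∨
        (r = 12 ∧ d = 5 ∧ r₁ = 5 ∧ d₁ = 2 ∧ a₁ = 1))) ∨
    (n = 2 ∧
      ((r = 11 ∧ d = 4 ∧ r₁ = 3 ∧ d₁ = 1 ∧ a₁ = 1) ∨
        (r = 7 ∧ d = 3 ∧ r₁ = 3 ∧ d₁ = 1 ∧ a₁ = 1) ∨
        (r = 8 ∧ d = 3 ∧ r₁ = 3 ∧ d₁ = 1 ∧ a₁ = 1))) ∨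
    (n = 3 ∧ r = 11 ∧ d = 3 ∧ r₁ = 4 ∧ d₁ = 1 ∧ a₁ = 1) := by
  obtain ⟨hsq, hd₁, hd₁d, hpair, hsign⟩ := h
  simp only [mukaiSq, mukaiPair] at hsq hpair hv
  obtain ⟨t, ht01, hE⟩ : ∃ t : ℤ, (t = 0 ∨ t = 1) ∧ r₁ * a₁ = n * d₁ ^ 2 + t := by
    rcases hsq with h0 | h0
    · exact ⟨0, Or.inl rfl, by linarith⟩
    · exact ⟨1, Or.inr rfl, by linarith⟩
  have ht0 : 0 ≤ t ∧ t ≤ 1 := by rcases ht01 with h0 | h0 <;> simp [h0]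
  have hv' : 4 * r ≤ 2 * n * d ^ 2 + 2 := by linarith
  have hstar : 2 * n * d * d₁ + 2 * t - 1 ≤ r * a₁ + 2 * r₁ := by
    have h1 := Int.lt_iff_add_one_le.mp hpair
    linarith [hE]
  have hnd₁sq : 1 ≤ n * d₁ ^ 2 := by
    have := mul_pos hn (pow_pos hd₁ 2); linarith
  have hra : 1 ≤ r₁ * a₁ := by omega
  have hndd₁ : 0 < n * d * d₁ := mul_pos (mul_pos hn hd) hd₁
  have ha₁pos : 0 < a₁ := by
    by_contra hc
    push_neg at hc
    have ha0 : a₁ ≠ 0 := by rintro rfl; simp at hra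
    have ha' : a₁ ≤ -1 := by omega
    have hr₁' : r₁ ≤ -1 := by
      by_contra hc2
      push_neg at hc2
      nlinarith [mul_nonneg (by omega : (0:ℤ) ≤ r₁) (by linarith : (0:ℤ) ≤ -a₁)]
    nlinarith [mul_nonneg hr (by linarith : (0:ℤ) ≤ -a₁)]
  have hr₁pos : 0 < r₁ := by
    by_contra hc
    push_neg at hc
    nlinarith [mul_nonneg (by linarith : (0:ℤ) ≤ -r₁) ha₁pos.le]
  rcases mul_pos_iff.mp hsign with ⟨h1, h2⟩ | ⟨h1, h2⟩
  · -- Case A : a₁ d > 2 d₁ and r₁ d > r d₁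
    have h1' : 2 * d₁ + 1 ≤ a₁ * d := by omega
    have h2' : r * d₁ + 1 ≤ r₁ * d := by omega
    have hT : n * d * d₁ ^ 2 + a₁ + (2 * t - 1) * d₁ ≤ 2 * r₁ * d₁ + t * d := by
      nlinarith [mul_le_mul_of_nonneg_left hstar hd₁.le,
        mul_le_mul_of_nonneg_left h2' ha₁pos.le,
        mul_le_mul_of_nonneg_right (le_of_eq hE) hd.le]
    have hTT : n * d₁ ^ 2 + a₁ ^ 2 + (2 * t - 1) * a₁ * d₁ ≤ t * a₁ * d + 2 * t * d₁ := by
      nlinarith [mul_le_mul_of_nonneg_right hT ha₁pos.le,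
        mul_le_mul_of_nonneg_left h1' (by linarith : (0:ℤ) ≤ n * d₁ ^ 2),
        mul_le_mul_of_nonneg_right (le_of_eq hE) hd₁.le]
    have ht1 : t = 1 := by
      rcases ht01 with h0 | h0
      · exfalso
        subst h0
        nlinarith [sq_nonneg (a₁ - d₁),
          mul_nonneg (by linarith : (0:ℤ) ≤ n - 1) (sq_nonneg d₁),
          mul_pos hd₁ hd₁]
      · exact h0
    subst ht1
    have hS : a₁ * d * (n * d₁ ^ 2 - 1) ≤ 2 * n * d₁ ^ 3 + 2 * d₁ - a₁ ^ 2 - a₁ * d₁ := by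
      nlinarith [mul_le_mul_of_nonneg_right hT ha₁pos.le,
        mul_le_mul_of_nonneg_right (le_of_eq hE) hd₁.le]
    have h2'' : a₁ * r * d₁ + a₁ ≤ n * d₁ ^ 2 * d + d := by
      nlinarith [mul_le_mul_of_nonneg_left h2' ha₁pos.le,
        mul_le_mul_of_nonneg_right (le_of_eq hE) hd.le]
    have hstar'' : 2 * n * d * d₁ * a₁ + a₁ ≤ r * a₁ ^ 2 + 2 * n * d₁ ^ 2 + 2 := by
      nlinarith [mul_le_mul_of_nonneg_left hstar ha₁pos.le, hE]
    by_cases hnd : n * d₁ ^ 2 = 1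
    · -- n = 1, d₁ = 1
      have hd₁sq : 1 ≤ d₁ ^ 2 := by nlinarith [sq_nonneg (d₁ - 1)]
      have hn1 : n = 1 := by
        have : n ≤ 1 := by nlinarith [mul_le_mul_of_nonneg_left hd₁sq hn.le]
        omega
      subst hn1
      have hd₁1 : d₁ = 1 := by
        have h1n : d₁ ^ 2 = 1 := by linarith
        have : d₁ ≤ 1 := by nlinarith
        omega
      subst hd₁1
      have hE2 : r₁ * a₁ = 2 := by linarith
      have ha₁2 : a₁ ≤ 2 := by
        by_contra hc
        push_neg at hc
        nlinarith [mul_le_mul_of_nonneg_right (by linarith : (3:ℤ) ≤ a₁) hr₁pos.le]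
      interval_cases a₁
      · -- a₁ = 1 : the family v₁ = (2,1,1)
        obtain rfl : r₁ = 2 := by omega
        refine Or.inl ⟨rfl, Or.inr (Or.inr (Or.inl
          ⟨by omega, by omega, by omega, rfl, rfl, rfl⟩))⟩
      · -- a₁ = 2 : impossible
        exfalso
        obtain rfl : r₁ = 1 := by omega
        omega
    · have hnd2 : 2 ≤ n * d₁ ^ 2 := by omega
      have hdia : n * d₁ ^ 2 + a₁ ^ 2 + a₁ * d₁ ≤ 4 * d₁ + 1 := by
        nlinarith [mul_le_mul_of_nonneg_right h1' (by linarith : (0:ℤ) ≤ n * d₁ ^ 2 - 1)]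
      have hd₁3 : d₁ ≤ 3 := by
        by_contra hc
        push_neg at hc
        nlinarith [mul_nonneg (by linarith : (0:ℤ) ≤ n - 1) (sq_nonneg d₁),
          mul_le_mul_of_nonneg_left ha₁pos hd₁.le, sq_nonneg (a₁ - 1),
          mul_nonneg (by linarith : (0:ℤ) ≤ d₁ - 4) (by linarith : (0:ℤ) ≤ d₁ - 1)]
      have hn3 : n ≤ 3 := by
        by_contra hc
        push_neg at hc
        nlinarith [mul_nonneg (by linarith : (0:ℤ) ≤ n - 4) (sq_nonneg d₁),
          mul_le_mul_of_nonneg_left ha₁pos hd₁.le, sq_nonneg (a₁ - 1),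
          mul_pos hd₁ hd₁]
      have ha₁3 : a₁ ≤ 3 := by
        by_contra hc
        push_neg at hc
        nlinarith [mul_le_mul_of_nonneg_right (by linarith : (4:ℤ) ≤ a₁) hd₁.le,
          mul_le_mul (by linarith : (4:ℤ) ≤ a₁) (by linarith : (4:ℤ) ≤ a₁)
            (by norm_num) (by linarith)]
      have hn1' : 1 ≤ n := hn
      have hd₁1' : 1 ≤ d₁ := hd₁
      have ha₁1' : 1 ≤ a₁ := ha₁pos
      clear hsq hpair hsign hra hstar h2' hT hTT hndd₁ hnd₁sq hv hv'
      interval_cases n <;> interval_cases d₁ <;> interval_cases a₁ <;>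
        first
          | (exfalso; norm_num at hnd hdia; done)
          | (revert hE hS h1' h2'' hstar''; norm_num <;> intros <;> omega)
  · -- Case B : a₁ d < 2 d₁ and r₁ d < r d₁ : empty
    exfalso
    have ha₁1 : a₁ = 1 := by
      by_contra hc
      have h2a : 2 ≤ a₁ := by omega
      nlinarith [mul_le_mul_of_nonneg_right h2a hd.le]
    subst ha₁1
    have hr₁E : r₁ = n * d₁ ^ 2 + t := by linarith
    have h2' : r₁ * d + 1 ≤ r * d₁ := by omega
    have hd₁B : d + 1 ≤ 2 * d₁ := by omega
    have hA : 2 * n * d ^ 2 * d₁ + (2 * t - 1) * d + 2 ≤ r * (d + 2 * d₁) := by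
      nlinarith [mul_le_mul_of_nonneg_right hstar hd.le]
    have hB : n * d ^ 2 + 4 * t * d + 4 ≤ 5 * d := by
      nlinarith [mul_le_mul_of_nonneg_right hv' (by linarith : (0:ℤ) ≤ d + 2 * d₁),
        mul_le_mul_of_nonneg_left hd₁B (by positivity : (0:ℤ) ≤ n * d ^ 2)]
    have htB : t = 0 := by
      rcases ht01 with h0 | h0
      · exact h0
      · exfalso
        subst h0
        nlinarith [sq_nonneg (2 * d - 1), mul_nonneg (by linarith : (0:ℤ) ≤ n - 1) (sq_nonneg d)]
    subst htB
    have hnB : n = 1 := by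
      have : n ≤ 1 := by
        by_contra hc
        push_neg at hc
        nlinarith [sq_nonneg (4 * d - 5), mul_nonneg (by linarith : (0:ℤ) ≤ n - 2) (sq_nonneg d)]
      omega
    subst hnB
    have hdB : d ≤ 4 := by
      by_contra hc
      push_neg at hc
      nlinarith [mul_nonneg (by linarith : (0:ℤ) ≤ d - 5) (by linarith : (0:ℤ) ≤ d - 1)]
    clear hsq hpair hsign hstar hA hB hE
    interval_cases d <;> interval_cases d₁ <;> norm_num at hr₁E hv' <;> omega
end

section
/- Let n be a positive integer and let v = (r, d, a) be an integer triple with r > 0, d > 0 and v² = 2nd² − 2ra ≥ −2. Let p be a positive integer and assume a ≥ −pdn, with strict inequality a > −pdn if n = 1 and p = 1. Then D_{e^{pH}·v} ⊆ e^{pH}·(D_v ∪ {(1, 0, 1)}); explicitly, for every v₁' = (r₁', d₁', a₁') ∈ D_{e^{pH}·v} with v₁' ≠ (1, p, np² + 1), the triple e^{−pH}·v₁' = (r₁', d₁' − r₁'p, a₁' + nr₁'p² − 2nd₁'p) belongs to D_v. -/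
set_option maxHeartbeats 4000000


/-- walls for the twist `e^{pH}·v` come from walls for `v`:
every `v₁' ∈ D_{e^{pH}·v}` other than `(1, p, np² + 1)` satisfies
`e^{−pH}·v₁' ∈ D_v`. -/
theorem D_of_twist (n r d a p : ℤ) (hn : 0 < n) (hr : 0 < r) (hd : 0 < d)
    (hv : -2 ≤ mukaiSq n r d a) (hp : 0 < p)
    (ha : -(p * d * n) ≤ a) (ha' : n = 1 → p = 1 → -(p * d * n) < a) :
    ∀ r₁' d₁' a₁' : ℤ,
      memD n r (d + r * p) (a + 2 * n * d * p + n * r * p ^ 2) r₁' d₁' a₁' →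
      ¬(r₁' = 1 ∧ d₁' = p ∧ a₁' = n * p ^ 2 + 1) →
      memD n r d a r₁' (d₁' - r₁' * p)
        (a₁' + n * r₁' * p ^ 2 - 2 * n * d₁' * p) := by
  intro r₁ D a₁ h hne
  have hdp : (0:ℤ) < d + r * p := by nlinarith [mul_pos hr hp]
  simp only [memD, mukaiSq, mukaiPair] at h hv ⊢
  obtain ⟨hsq, hDpos, hDle, hpair, hprod⟩ := h
  -- ε : the "sphericity defect"
  obtain ⟨ε, hε0, hε1, hkey⟩ : ∃ ε : ℤ, 0 ≤ ε ∧ ε ≤ 1 ∧ r₁ * a₁ = n * D ^ 2 + ε := by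
    rcases hsq with h | h
    · exact ⟨0, le_refl _, zero_le_one, by linarith⟩
    · exact ⟨1, zero_le_one, le_refl _, by linarith⟩
  have hkey2 : r₁ * (a₁ + n * r₁ * p ^ 2 - 2 * n * D * p)
      = n * (D - r₁ * p) ^ 2 + ε := by linear_combination hkey
  have hane : 0 ≤ a + n * p * d := by linarith
  have hra : r * a ≤ n * d ^ 2 + 1 := by linarith
  -- pairing bound in untwisted coordinates
  have hm : 2 * n * d * (D - r₁ * p) - r * (a₁ + n * r₁ * p ^ 2 - 2 * n * D * p)
      - r₁ * a ≤ 1 - 2 * ε := by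
    rcases hsq with h | h <;> nlinarith [hpair, hkey]
  -- Step 1 : 0 < D - r₁ * p
  have hd1 : 0 < D - r₁ * p := by
    by_contra hcon
    push_neg at hcon
    have hr1 : 1 ≤ r₁ := by nlinarith [hDpos, hp]
    have hS : 0 < r₁ * (d + r * p) - r * D := by
      nlinarith [mul_nonneg hr.le (by linarith : (0:ℤ) ≤ r₁ * p - D),
        mul_nonneg (by linarith : (0:ℤ) ≤ r₁ - 1) hd.le]
    have hA' : 0 < a₁ * (d + r * p) - (a + 2 * n * d * p + n * r * p ^ 2) * D := by
      by_contra hA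
      push_neg at hA
      nlinarith [hprod, mul_nonneg (neg_nonneg.2 hA) hS.le]
    rcases hcon.lt_or_eq with hlt | heq
    · -- D - r₁p ≤ -1 : contradiction with A' > 0
      have h1 : 0 < r₁ * (a₁ * (d + r * p) - (a + 2 * n * d * p + n * r * p ^ 2) * D) :=
        mul_pos (by linarith) hA'
      have hid : r₁ * (a₁ * (d + r * p) - (a + 2 * n * d * p + n * r * p ^ 2) * D)
          = (d + r * p) * (n * (D - r₁ * p) * D + ε) - (r₁ * D) * (a + n * p * d) := by
        linear_combination (d + r * p) * hkey
      have hnD : 0 < n * D := mul_pos hn hDpos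
      have h2 : 0 < (n * D) * (r₁ * p - D) := mul_pos hnD (by linarith)
      have h3 : 0 ≤ (r₁ * D) * (a + n * p * d) :=
        mul_nonneg (mul_nonneg (by linarith) hDpos.le) hane
      have h4 : (d + r * p) * (n * (D - r₁ * p) * D + ε) ≤ 0 := by
        apply mul_nonpos_of_nonneg_of_nonpos hdp.le
        nlinarith [h2]
      linarith [h1, hid, h3, h4]
    · -- D = r₁ p
      have hD : D = r₁ * p := by linarith
      subst hD
      interval_cases ε
      · -- ε = 0 : a₁ = n r₁ p²
        have h0 : r₁ * (a₁ - n * r₁ * p ^ 2) = 0 := by linear_combination hkey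
        have ha1 : a₁ = n * r₁ * p ^ 2 := by
          rcases mul_eq_zero.1 h0 with h | h
          · linarith
          · linarith
        rw [ha1] at hA'
        have hge : 0 ≤ (r₁ * p) * (a + n * p * d) :=
          mul_nonneg (mul_nonneg (by linarith) hp.le) hane
        nlinarith [hA', hge]
      · -- ε = 1 : v₁' is the excluded class
        have h1 : r₁ * (a₁ - n * r₁ * p ^ 2) = 1 := by linear_combination hkey
        rcases Int.isUnit_iff.mp (IsUnit.of_mul_eq_one _ h1) with h | h
        · apply hne
          refine ⟨h, by rw [h, one_mul], ?_⟩
          rw [h] at h1; nlinarith [h1]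
        · linarith
  -- Step 2 : 1 ≤ r₁
  have hr1 : 1 ≤ r₁ := by
    by_contra hcon
    push_neg at hcon
    have hr1le : r₁ ≤ 0 := by linarith
    rcases hr1le.lt_or_eq with hneg | h0
    · -- r₁ ≤ -1
      have hT : 1 ≤ -r₁ := by linarith
      have htp : (-r₁) * p ≤ (D - r₁ * p) - 1 := by linarith
      have htp1 : 1 ≤ (-r₁) * p := by nlinarith [hT, hp]
      have hd1ge : 2 ≤ D - r₁ * p := by linarith
      have e1 : 0 ≤ r₁ ^ 2 * (a + n * p * d) := mul_nonneg (sq_nonneg r₁) hane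
      have e2 : (-r₁) * (2 * n * d * (D - r₁ * p)
            - r * (a₁ + n * r₁ * p ^ 2 - 2 * n * D * p) - r₁ * a)
          ≤ (-r₁) * (1 - 2 * ε) := mul_le_mul_of_nonneg_left hm (by linarith)
      have e3 : r * (r₁ * (a₁ + n * r₁ * p ^ 2 - 2 * n * D * p))
          = r * (n * (D - r₁ * p) ^ 2 + ε) := by rw [hkey2]
      have hnd : 1 ≤ n * d := by nlinarith [mul_pos hn hd]
      have htnd : 0 ≤ n * d * (-r₁) :=
        mul_nonneg (mul_nonneg hn.le hd.le) (by linarith)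
      have e4 : (n * d * (-r₁)) * ((-r₁) * p) ≤ (n * d * (-r₁)) * ((D - r₁ * p) - 1) :=
        mul_le_mul_of_nonneg_left htp htnd
      have e5 : (-r₁) * 1 ≤ (-r₁) * (n * d) := mul_le_mul_of_nonneg_left hnd (by linarith)
      have e6 : (n * d * (-r₁)) * 2 ≤ (n * d * (-r₁)) * (D - r₁ * p) :=
        mul_le_mul_of_nonneg_left hd1ge htnd
      have e7 : 0 ≤ r * n * (D - r₁ * p) ^ 2 :=
        mul_nonneg (mul_nonneg hr.le hn.le) (sq_nonneg _)
      have e8 : 0 ≤ r * ε := mul_nonneg hr.le hε0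
      nlinarith [e1, e2, e3, e4, e5, e6, e7, e8]
    · -- r₁ = 0 impossible
      rw [h0] at hkey
      nlinarith [mul_pos (mul_pos hn hDpos) hDpos, hkey]
  -- Step 3 : D - r₁ * p ≤ d
  have hd1le : D - r₁ * p ≤ d := by
    by_contra hcon
    push_neg at hcon
    have hcon' : d + 1 ≤ D - r₁ * p := by linarith
    have hrr : r₁ + 1 ≤ r := by nlinarith [hDle, hp]
    have hs : r₁ * (d + r * p) - r * D ≤ -(d + r) := by
      nlinarith [mul_le_mul_of_nonneg_right (by linarith : r₁ ≤ r - 1) hd.le,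
        mul_le_mul_of_nonneg_left hcon' hr.le]
    have hA'neg : a₁ * (d + r * p) - (a + 2 * n * d * p + n * r * p ^ 2) * D < 0 := by
      by_contra hA
      push_neg at hA
      nlinarith [hprod, mul_nonneg hA (by linarith : (0:ℤ) ≤ -(r₁ * (d + r * p) - r * D))]
    have hidE : r * (r₁ * (a₁ * (d + r * p) - (a + 2 * n * d * p + n * r * p ^ 2) * D))
        = r * (n * (D - r₁ * p) ^ 2 + ε) * (d + r * p) - r * r₁ * a * D
          - n * p ^ 2 * r * r₁ * (r₁ * (d + r * p) - r * D) := by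
      linear_combination (r * (d + r * p)) * hkey
    have hneg : r * (r₁ * (a₁ * (d + r * p) - (a + 2 * n * d * p + n * r * p ^ 2) * D)) < 0 :=
      mul_neg_of_pos_of_neg hr (mul_neg_of_pos_of_neg (by linarith) hA'neg)
    have hposrD : (0:ℤ) < r₁ * D := mul_pos (by linarith) hDpos
    have e1 : r * a * (r₁ * D) ≤ (n * d ^ 2 + 1) * (r₁ * D) :=
      mul_le_mul_of_nonneg_right hra hposrD.le
    have hdpD : 0 ≤ n * (d + r * p) * D :=
      mul_nonneg (mul_nonneg hn.le hdp.le) hDpos.le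
    have e2 : (n * (d + r * p) * D) * (d + r)
        ≤ (n * (d + r * p) * D) * (-(r₁ * (d + r * p) - r * D)) :=
      mul_le_mul_of_nonneg_left (by linarith) hdpD
    have e3 : r₁ * D ≤ (r - 1) * D := mul_le_mul_of_nonneg_right (by linarith) hDpos.le
    have e4 : 0 ≤ r * ε * (d + r * p) :=
      mul_nonneg (mul_nonneg hr.le hε0) hdp.le
    have q0 : D ≤ (d + r * p) * D := le_mul_of_one_le_left hDpos.le (by linarith)
    have q1 : (d + r) * D ≤ (d + r) * ((d + r * p) * D) :=
      mul_le_mul_of_nonneg_left q0 (by linarith)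
    have q2 : (d + r) * ((d + r * p) * D) ≤ n * ((d + r) * ((d + r * p) * D)) :=
      le_mul_of_one_le_left (by nlinarith [mul_pos (mul_pos (by linarith : (0:ℤ) < d + r) hdp) hDpos]) (by linarith)
    have hidE2 : r * (n * (D - r₁ * p) ^ 2 + ε) * (d + r * p) - (n * d ^ 2 + 1) * (r₁ * D)
        - n * p ^ 2 * r * r₁ * (r₁ * (d + r * p) - r * D)
        = (n * (d + r * p) * D) * (-(r₁ * (d + r * p) - r * D)) + r * ε * (d + r * p)
          - r₁ * D := by ring
    linarith [hidE, hneg, e1, e2, e3, e4, q1, q2, hidE2,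
      mul_pos (by linarith : (0:ℤ) < d + 1) hDpos]
  refine ⟨?_, hd1, hd1le, ?_, ?_⟩
  · rcases hsq with h | h
    · left; linear_combination h
    · right; linear_combination h
  · -- pairing
    rcases hsq with h | h <;> linarith [hpair]
  · -- the product condition
    have hs0 : r₁ * (d + r * p) - r * D ≠ 0 := by
      intro h0
      rw [h0, mul_zero] at hprod
      exact lt_irrefl 0 hprod
    have hs2 : 1 ≤ (r₁ * (d + r * p) - r * D) ^ 2 := by
      rcases hs0.lt_or_gt with h | h <;> nlinarith [h]
    -- abbreviations (only in comments): s = r₁d - r·d1, A = a1·d - a·d1, B = r·a1 - r₁·a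
    have hI1 : p * ((r₁ * d - r * (D - r₁ * p)) *
          (r₁ ^ 2 * ((a₁ + n * r₁ * p ^ 2 - 2 * n * D * p) * d - a * (D - r₁ * p))
            - r₁ * (D - r₁ * p) * (r * (a₁ + n * r₁ * p ^ 2 - 2 * n * D * p) - r₁ * a)))
        = p * ((r₁ * d - r * (D - r₁ * p)) ^ 2 * (n * (D - r₁ * p) ^ 2 + ε)) := by
      linear_combination (p * (r₁ * d - r * (D - r₁ * p)) ^ 2) * hkey2
    by_contra hAs
    push_neg at hAs
    have hX1 : 0 < (r₁ * (D - r₁ * p)) *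
        ((a₁ * (d + r * p) - (a + 2 * n * d * p + n * r * p ^ 2) * D) *
          (r₁ * (d + r * p) - r * D)) :=
      mul_pos (mul_pos (by linarith) hd1) hprod
    have hX3 : 0 ≤ (-(((a₁ + n * r₁ * p ^ 2 - 2 * n * D * p) * d - a * (D - r₁ * p)) *
          (r₁ * d - r * (D - r₁ * p)))) * (r₁ * (D - r₁ * p) + p * r₁ ^ 2) := by
      apply mul_nonneg (by linarith)
      have h1 : 0 < r₁ * (D - r₁ * p) := mul_pos (by linarith) hd1
      have h2 : 0 < p * r₁ ^ 2 := mul_pos hp (pow_pos (by linarith) 2)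
      linarith [h1, h2]
    have hX4 : 0 < n * p ^ 2 * (r₁ * (d + r * p) - r * D) ^ 2 * (r₁ * (D - r₁ * p)) :=
      mul_pos (mul_pos (mul_pos hn (pow_pos hp 2)) (lt_of_lt_of_le one_pos hs2))
        (mul_pos (by linarith) hd1)
    have hX5 : 0 < p * (r₁ * (d + r * p) - r * D) ^ 2 * (n * (D - r₁ * p) ^ 2) :=
      mul_pos (mul_pos hp (lt_of_lt_of_le one_pos hs2)) (mul_pos hn (pow_pos hd1 2))
    have hX6 : 0 ≤ p * (r₁ * (d + r * p) - r * D) ^ 2 * ε :=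
      mul_nonneg (mul_nonneg hp.le (sq_nonneg _)) hε0
    linarith [hX1, hI1, hX3, hX4, hX5, hX6]
end

section
/- Let n and d be positive integers, set a = ⌊(nd² + 1)/2⌋, and let v = (2, d, a). If v₁ = (r₁, d₁, a₁) ∈ D_v^{BN}, then n = 1, v₁ = (1, 1, 2), and v = (2, 3, 5). -/

lemma key_lemma_s19 (n d a r₁ d₁ a₁ δ ε : ℤ) (hn : 0 < n) (hd : 0 < d)
    (hd1 : 0 < d₁) (hr1 : 0 < r₁)
    (hA : r₁ * a₁ = n * d₁ ^ 2 + δ) (hE : 2 * a = n * d ^ 2 + ε)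
    (hp : 0 < d * r₁ - d₁ * 2) (hq : d * r₁ - d₁ * 2 ≤ d * a₁ - d₁ * a) :
    2 * r₁ * (d * r₁ - 2 * d₁) + n * d * d₁ + r₁ * d₁ * ε ≤ 2 * d * δ := by
  have e1 : d * (r₁ * a₁) = d * (n * d₁ ^ 2) + d * δ := by rw [hA]; ring
  have e2 : r₁ * d₁ * (2 * a) = r₁ * d₁ * (n * d ^ 2) + r₁ * d₁ * ε := by rw [hE]; ring
  have h1 : 2 * r₁ * (d * r₁ - d₁ * 2) ≤ 2 * r₁ * (d * a₁ - d₁ * a) :=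
    mul_le_mul_of_nonneg_left hq (by linarith)
  have h2 : 0 ≤ n * d * d₁ * (d * r₁ - 2 * d₁ - 1) :=
    mul_nonneg (by positivity) (by linarith)
  nlinarith [h1, h2, e1, e2]

/-- for `v = (2, d, ⌊(nd² + 1)/2⌋)`, if `v₁ ∈ D_v^{BN}` then
`n = 1`, `v₁ = (1, 1, 2)` and `v = (2, 3, 5)`. -/
theorem DBN_rank_two (n d r₁ d₁ a₁ : ℤ) (hn : 0 < n) (hd : 0 < d)
    (h : memDBN n 2 d ((n * d ^ 2 + 1) / 2) r₁ d₁ a₁) :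
    n = 1 ∧ r₁ = 1 ∧ d₁ = 1 ∧ a₁ = 2 ∧ d = 3 ∧ (n * d ^ 2 + 1) / 2 = 5 := by
  simp only [memDBN, memD, mukaiSq, mukaiPair] at h
  obtain ⟨⟨hsq, hd1, hd1d, hpair, hprod⟩, hp, hq⟩ := h
  set a : ℤ := (n * d ^ 2 + 1) / 2 with ha
  have h2a : 2 * a = n * d ^ 2 ∨ 2 * a = n * d ^ 2 + 1 := by
    have hm : ∃ m : ℤ, m = n * d ^ 2 := ⟨_, rfl⟩
    obtain ⟨m, hm⟩ := hm
    rw [ha, ← hm]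
    omega
  have hr1 : 0 < r₁ := by
    by_contra hc
    push_neg at hc
    have : d * r₁ ≤ 0 := mul_nonpos_of_nonneg_of_nonpos hd.le hc
    linarith
  have hδ : r₁ * a₁ = n * d₁ ^ 2 ∨ r₁ * a₁ = n * d₁ ^ 2 + 1 := by
    rcases hsq with h' | h'
    · left; linarith
    · right; linarith
  -- get the key inequality with concrete δ, ε
  have key : ∀ δ ε : ℤ, r₁ * a₁ = n * d₁ ^ 2 + δ → 2 * a = n * d ^ 2 + ε →
      2 * r₁ * (d * r₁ - 2 * d₁) + n * d * d₁ + r₁ * d₁ * ε ≤ 2 * d * δ :=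
    fun δ ε hA hE => key_lemma_s19 n d a r₁ d₁ a₁ δ ε hn hd hd1 hr1 hA hE hp hq
  have hrp : 1 ≤ r₁ * (d * r₁ - d₁ * 2) := mul_pos hr1 hp
  have hδ1 : r₁ * a₁ = n * d₁ ^ 2 + 1 := by
    rcases hδ with hA | hA
    · exfalso
      rcases h2a with hE | hE
      · have := key 0 0 (by linarith) (by linarith)
        nlinarith [mul_pos (mul_pos hn hd) hd1]
      · have := key 0 1 (by linarith) hE
        nlinarith [mul_pos (mul_pos hn hd) hd1, mul_pos hr1 hd1]
    · exact hA
  -- n = 1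
  have hεnn : ∀ ε : ℤ, 2 * a = n * d ^ 2 + ε → 0 ≤ ε → False → True := fun _ _ _ _ => trivial
  have hn1 : n = 1 := by
    have hle : n ≤ 1 := by
      rcases h2a with hE | hE
      · have := key 1 0 hδ1 (by linarith)
        nlinarith [mul_nonneg (mul_nonneg hn.le hd.le) (by linarith : (0:ℤ) ≤ d₁ - 1)]
      · have := key 1 1 hδ1 hE
        nlinarith [mul_nonneg (mul_nonneg hn.le hd.le) (by linarith : (0:ℤ) ≤ d₁ - 1),
          mul_pos hr1 hd1]
    omega
  subst hn1
  -- d₁ = 1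
  have hd11 : d₁ = 1 := by
    have hle : d₁ ≤ 1 := by
      by_contra hc
      push_neg at hc
      rcases h2a with hE | hE
      · have := key 1 0 hδ1 (by linarith)
        nlinarith [mul_nonneg hd.le (by linarith : (0:ℤ) ≤ d₁ - 2)]
      · have := key 1 1 hδ1 hE
        nlinarith [mul_nonneg hd.le (by linarith : (0:ℤ) ≤ d₁ - 2), mul_pos hr1 hd1]
    omega
  subst hd11
  have hra : r₁ * a₁ = 2 := by linarith [hδ1]
  have ha1 : 0 < a₁ := by
    by_contra hc
    push_neg at hc
    have : r₁ * a₁ ≤ 0 := mul_nonpos_of_nonneg_of_nonpos hr1.le hc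
    omega
  have hr2 : r₁ ≤ 2 := by nlinarith [mul_nonneg hr1.le (by linarith : (0:ℤ) ≤ a₁ - 1)]
  interval_cases r₁
  · -- r₁ = 1, so a₁ = 2
    have ha2 : a₁ = 2 := by linarith
    subst ha2
    have hd3 : d = 3 := by
      have hge : 3 ≤ d := by linarith [hp]
      have hle : d ≤ 3 := by
        rcases h2a with hE | hE
        · nlinarith [sq_nonneg (d - 3)]
        · nlinarith [sq_nonneg (d - 3)]
      omega
    subst hd3
    norm_num [ha]
  · -- r₁ = 2, a₁ = 1 : contradiction
    exfalso
    have ha2 : a₁ = 1 := by linarith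
    subst ha2
    rcases h2a with hE | hE
    · nlinarith [sq_nonneg (d - 2)]
    · nlinarith [sq_nonneg (d - 2)]
end
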